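/- arXiv:1410.1803 — 5 statements merged into one kernel-verified Lean document; each statement's English description precedes it below -/
import Mathlib

section
/- (Gale–Ryser) A bipartite graph G = (A ∪ B, E) with |A| = |B| contains an r-factor (a spanning r-regular subgraph) if and only if for all X ⊆ A and Y ⊆ B, the number of edges between X and Y satisfies e_G(X,Y) ≥ r(|X| + |Y| − |B|). -/
private lemma card_attach_filter {α : Type*} (s : Finset α) (p : α → Prop) [DecidablePred p] :
    (s.attach.filter (fun x => p x.1)).card = (s.filter p).card := by
  classical
  rw [← Finset.card_image_of_injective (s.attach.filter (fun x => p x.1)) Subtype.val_injective]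
  congr 1
  ext x
  simp only [Finset.mem_image, Finset.mem_filter, Finset.mem_attach, true_and,
    Subtype.exists, exists_and_left, exists_prop, exists_eq_right_right]
  tauto

section GR

variable {A B : Type*} [Fintype A] [Fintype B] [DecidableEq A] [DecidableEq B]
  (r : ℕ) (E : Finset (A × B))

/-- The gadget bipartite graph used to reduce the existence of an `r`-factor to a
perfect matching. -/
private def GRt : (A × Fin r) ⊕ {x // x ∈ E} → Finset ({x // x ∈ E} ⊕ (B × Fin r)) :=
  Sum.elim
    (fun ai => (E.attach.filter (fun e => e.1.1 = ai.1)).image Sum.inl)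
    (fun e => insert (Sum.inl e)
      ((Finset.univ : Finset (Fin r)).image (fun j => Sum.inr (e.1.2, j))))

private lemma GR_hall
    (h : ∀ (X : Finset A) (Y : Finset B),
      (r : ℤ) * ((X.card : ℤ) + (Y.card : ℤ) - (Fintype.card B : ℤ)) ≤
        ((E.filter (fun e => e.1 ∈ X ∧ e.2 ∈ Y)).card : ℤ))
    (s : Finset ((A × Fin r) ⊕ {x // x ∈ E})) :
    s.card ≤ (s.biUnion (GRt r E)).card := by
  classical
  set X : Finset A := s.toLeft.image Prod.fst with hX
  set Y : Finset B := s.toRight.image (fun e => e.1.2) with hY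
  set T := s.biUnion (GRt r E) with hT
  -- the left part of T contains s.toRight and all edges with first coordinate in X
  have hTL : s.toRight ∪ E.attach.filter (fun e => e.1.1 ∈ X) ⊆ T.toLeft := by
    intro e he
    rw [Finset.mem_toLeft]
    rcases Finset.mem_union.mp he with he | he
    · refine Finset.mem_biUnion.mpr ⟨Sum.inr e, Finset.mem_toRight.mp he, ?_⟩
      simp [GRt]
    · obtain ⟨hmem, hx⟩ := Finset.mem_filter.mp he
      obtain ⟨p, hp, hpe⟩ := Finset.mem_image.mp hx
      refine Finset.mem_biUnion.mpr ⟨Sum.inl p, Finset.mem_toLeft.mp hp, ?_⟩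
      simp only [GRt, Sum.elim_inl, Finset.mem_image]
      exact ⟨e, Finset.mem_filter.mpr ⟨Finset.mem_attach _ _, hpe.symm⟩, rfl⟩
  -- the right part of T contains Y × Fin r
  have hTR : Y ×ˢ (Finset.univ : Finset (Fin r)) ⊆ T.toRight := by
    rintro ⟨b, j⟩ hm
    obtain ⟨hb, -⟩ := Finset.mem_product.mp hm
    obtain ⟨e, he, hbe⟩ := Finset.mem_image.mp hb
    rw [Finset.mem_toRight]
    refine Finset.mem_biUnion.mpr ⟨Sum.inr e, Finset.mem_toRight.mp he, ?_⟩
    simp only [GRt, Sum.elim_inr, Finset.mem_insert, Finset.mem_image]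
    exact Or.inr ⟨j, Finset.mem_univ _, by rw [hbe]⟩
  -- cardinality bookkeeping
  have hsA : s.toLeft.card ≤ X.card * r := by
    have hsub : s.toLeft ⊆ X ×ˢ (Finset.univ : Finset (Fin r)) := by
      intro p hp
      exact Finset.mem_product.mpr ⟨Finset.mem_image_of_mem _ hp, Finset.mem_univ _⟩
    calc s.toLeft.card ≤ (X ×ˢ (Finset.univ : Finset (Fin r))).card := Finset.card_le_card hsub
      _ = X.card * r := by rw [Finset.card_product, Finset.card_univ, Fintype.card_fin]
  have hint : s.toRight ∩ E.attach.filter (fun e => e.1.1 ∈ X) ⊆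
      E.attach.filter (fun e => e.1.1 ∈ X ∧ e.1.2 ∈ Y) := by
    intro e he
    obtain ⟨h1, h2⟩ := Finset.mem_inter.mp he
    obtain ⟨-, hx⟩ := Finset.mem_filter.mp h2
    exact Finset.mem_filter.mpr ⟨Finset.mem_attach _ _, hx, Finset.mem_image_of_mem _ h1⟩
  have hunion : (s.toRight ∪ E.attach.filter (fun e => e.1.1 ∈ X)).card +
      (s.toRight ∩ E.attach.filter (fun e => e.1.1 ∈ X)).card =
      s.toRight.card + (E.attach.filter (fun e => e.1.1 ∈ X)).card :=
    Finset.card_union_add_card_inter _ _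
  have hDX : (E.attach.filter (fun e => e.1.1 ∈ X)).card = (E.filter (fun p => p.1 ∈ X)).card :=
    card_attach_filter E (fun p => p.1 ∈ X)
  have hIXY : (E.attach.filter (fun e => e.1.1 ∈ X ∧ e.1.2 ∈ Y)).card =
      (E.filter (fun p => p.1 ∈ X ∧ p.2 ∈ Y)).card :=
    card_attach_filter E (fun p => p.1 ∈ X ∧ p.2 ∈ Y)
  have hsplit : (E.filter (fun p => p.1 ∈ X ∧ p.2 ∈ Y)).card +
      (E.filter (fun p => p.1 ∈ X ∧ p.2 ∉ Y)).card = (E.filter (fun p => p.1 ∈ X)).card := by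
    rw [← Finset.filter_filter, ← Finset.filter_filter,
      Finset.card_filter_add_card_filter_not]
  have hGR := h X Yᶜ
  have hYc : (E.filter (fun e => e.1 ∈ X ∧ e.2 ∈ Yᶜ)) =
      (E.filter (fun p => p.1 ∈ X ∧ p.2 ∉ Y)) := by
    apply Finset.filter_congr
    intro p _
    simp [Finset.mem_compl]
  rw [hYc] at hGR
  have hYcard : Yᶜ.card + Y.card = Fintype.card B := by
    rw [Finset.card_compl]
    have : Y.card ≤ Fintype.card B := by simpa using Finset.card_le_univ Y
    omega
  have hTcard : T.toLeft.card + T.toRight.card = T.card := Finset.card_toLeft_add_card_toRight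
  have hTL' : (s.toRight ∪ E.attach.filter (fun e => e.1.1 ∈ X)).card ≤ T.toLeft.card :=
    Finset.card_le_card hTL
  have hTR' : Y.card * r ≤ T.toRight.card := by
    calc Y.card * r = (Y ×ˢ (Finset.univ : Finset (Fin r))).card := by
          rw [Finset.card_product, Finset.card_univ, Fintype.card_fin]
      _ ≤ T.toRight.card := Finset.card_le_card hTR
  have hscard : s.toLeft.card + s.toRight.card = s.card := Finset.card_toLeft_add_card_toRight
  have hintcard := Finset.card_le_card hint
  -- now conclude by linear arithmetic over ℤ
  have hYr : (Yᶜ.card : ℤ) * r + (Y.card : ℤ) * r = (Fintype.card B : ℤ) * r := by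
    rw [← add_mul]
    norm_cast
    rw [hYcard]
  zify at hsA hunion hDX hIXY hsplit hYcard hTcard hTL' hTR' hscard hintcard
  linarith

end GR

/-- Gale–Ryser: a bipartite graph `E ⊆ A × B` with `|A| = |B|` contains an `r`-factor
(a spanning subgraph that is `r`-regular on both sides) if and only if for all
`X ⊆ A`, `Y ⊆ B` we have `e(X,Y) ≥ r(|X| + |Y| − |B|)`. -/
theorem stmt2 {A B : Type*} [Fintype A] [Fintype B] [DecidableEq A] [DecidableEq B]
    (r : ℕ) (E : Finset (A × B)) (hcard : Fintype.card A = Fintype.card B) :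
    (∃ F : Finset (A × B), F ⊆ E ∧
        (∀ a : A, (F.filter (fun e => e.1 = a)).card = r) ∧
        (∀ b : B, (F.filter (fun e => e.2 = b)).card = r)) ↔
      (∀ (X : Finset A) (Y : Finset B),
        (r : ℤ) * ((X.card : ℤ) + (Y.card : ℤ) - (Fintype.card B : ℤ)) ≤
          ((E.filter (fun e => e.1 ∈ X ∧ e.2 ∈ Y)).card : ℤ)) := by
  classical
  constructor
  · -- easy direction
    rintro ⟨F, hFE, hA, hB⟩ X Y
    have hXsum : (F.filter (fun p => p.1 ∈ X)).card = X.card * r := by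
      have heq : F.filter (fun p => p.1 ∈ X) = X.biUnion (fun a => F.filter (fun p => p.1 = a)) := by
        ext p
        simp only [Finset.mem_filter, Finset.mem_biUnion]
        constructor
        · rintro ⟨hp, hx⟩; exact ⟨p.1, hx, hp, rfl⟩
        · rintro ⟨a, ha, hp, hpa⟩; exact ⟨hp, hpa ▸ ha⟩
      rw [heq, Finset.card_biUnion]
      · simp [hA, mul_comm]
      · intro x hx y hy hxy
        simp only [Finset.disjoint_left, Finset.mem_filter]
        rintro p ⟨-, h1⟩ ⟨-, h2⟩
        exact hxy (h1.symm.trans h2)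
    have hYsum : (F.filter (fun p => p.2 ∉ Y)).card = Yᶜ.card * r := by
      have heq : F.filter (fun p => p.2 ∉ Y) = Yᶜ.biUnion (fun b => F.filter (fun p => p.2 = b)) := by
        ext p
        simp only [Finset.mem_filter, Finset.mem_biUnion, Finset.mem_compl]
        constructor
        · rintro ⟨hp, hy⟩; exact ⟨p.2, hy, hp, rfl⟩
        · rintro ⟨b, hb, hp, hpb⟩; exact ⟨hp, hpb ▸ hb⟩
      rw [heq, Finset.card_biUnion]
      · simp [hB, mul_comm]
      · intro x hx y hy hxy
        simp only [Finset.disjoint_left, Finset.mem_filter]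
        rintro p ⟨-, h1⟩ ⟨-, h2⟩
        exact hxy (h1.symm.trans h2)
    have hsplit : (F.filter (fun p => p.1 ∈ X ∧ p.2 ∈ Y)).card +
        (F.filter (fun p => p.1 ∈ X ∧ p.2 ∉ Y)).card = X.card * r := by
      rw [← Finset.filter_filter, ← Finset.filter_filter,
        Finset.card_filter_add_card_filter_not, hXsum]
    have h2 : (F.filter (fun p => p.1 ∈ X ∧ p.2 ∉ Y)).card ≤ Yᶜ.card * r := by
      rw [← hYsum]
      apply Finset.card_le_card
      apply Finset.monotone_filter_right
      intro p _ hp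
      exact hp.2
    have h3 : (F.filter (fun p => p.1 ∈ X ∧ p.2 ∈ Y)).card ≤
        (E.filter (fun e => e.1 ∈ X ∧ e.2 ∈ Y)).card :=
      Finset.card_le_card (Finset.filter_subset_filter _ hFE)
    have hYcard : Yᶜ.card + Y.card = Fintype.card B := by
      rw [Finset.card_compl]
      have : Y.card ≤ Fintype.card B := by simpa using Finset.card_le_univ Y
      omega
    have hYr : (Yᶜ.card : ℤ) * r + (Y.card : ℤ) * r = (Fintype.card B : ℤ) * r := by
      rw [← add_mul]; norm_cast; rw [hYcard]
    zify at hsplit h2 h3 hYcard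
    linarith
  · -- hard direction via Hall's theorem on the gadget graph
    intro h
    obtain ⟨f, hfinj, hf⟩ := (Finset.all_card_le_biUnion_card_iff_exists_injective
      (GRt r E)).mp (GR_hall r E h)
    have hbij : Function.Bijective f := by
      rw [Fintype.bijective_iff_injective_and_card]
      refine ⟨hfinj, ?_⟩
      simp [Fintype.card_sum, Fintype.card_prod, Fintype.card_fin, Fintype.card_coe, hcard]
      ring
    -- structural facts about f
    have fact1 : ∀ (a : A) (i : Fin r), ∃ e : {x // x ∈ E},
        f (Sum.inl (a, i)) = Sum.inl e ∧ e.1.1 = a := by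
      intro a i
      have := hf (Sum.inl (a, i))
      simp only [GRt, Sum.elim_inl, Finset.mem_image, Finset.mem_filter, Finset.mem_attach,
        true_and] at this
      obtain ⟨e, he, heq⟩ := this
      exact ⟨e, heq.symm, he⟩
    have fact2 : ∀ e : {x // x ∈ E},
        f (Sum.inr e) = Sum.inl e ∨ ∃ j : Fin r, f (Sum.inr e) = Sum.inr (e.1.2, j) := by
      intro e
      have := hf (Sum.inr e)
      simp only [GRt, Sum.elim_inr, Finset.mem_insert, Finset.mem_image, Finset.mem_univ,
        true_and] at this
      rcases this with h1 | ⟨j, hj⟩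
      · exact Or.inl h1
      · exact Or.inr ⟨j, hj.symm⟩
    set F : Finset (A × B) :=
      (E.attach.filter (fun e => (f (Sum.inr e)).isRight)).image Subtype.val with hF
    have hFE : F ⊆ E := by
      intro p hp
      obtain ⟨e, he, hep⟩ := Finset.mem_image.mp hp
      exact hep ▸ e.2
    refine ⟨F, hFE, ?_, ?_⟩
    · -- degree r at every a
      intro a
      have hFa : F.filter (fun p => p.1 = a) =
          (E.attach.filter (fun e => (f (Sum.inr e)).isRight ∧ e.1.1 = a)).image Subtype.val := by
        rw [hF, Finset.filter_image, Finset.filter_filter]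
      have hFacard : (F.filter (fun p => p.1 = a)).card =
          (E.attach.filter (fun e => (f (Sum.inr e)).isRight ∧ e.1.1 = a)).card := by
        rw [hFa, Finset.card_image_of_injective _ Subtype.val_injective]
      set Za : Finset ((A × Fin r) ⊕ {x // x ∈ E}) :=
        ((Finset.univ : Finset (Fin r)).image (fun i => Sum.inl (a, i))) ∪
        ((E.attach.filter (fun e => e.1.1 = a ∧ ¬ (f (Sum.inr e)).isRight)).image Sum.inr)
        with hZa
      have himg : Za.image f = (E.attach.filter (fun e => e.1.1 = a)).image Sum.inl := by
        ext y
        constructor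
        · intro hy
          obtain ⟨x, hx, hfx⟩ := Finset.mem_image.mp hy
          rcases Finset.mem_union.mp hx with hx | hx
          · obtain ⟨i, -, hi⟩ := Finset.mem_image.mp hx
            obtain ⟨e, he1, he2⟩ := fact1 a i
            exact Finset.mem_image.mpr ⟨e, Finset.mem_filter.mpr ⟨Finset.mem_attach _ _, he2⟩,
              by rw [← hfx, ← hi, he1]⟩
          · obtain ⟨e, he, hie⟩ := Finset.mem_image.mp hx
            obtain ⟨-, hea, hnr⟩ := Finset.mem_filter.mp he
            rcases fact2 e with hfe | ⟨j, hfe⟩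
            · exact Finset.mem_image.mpr ⟨e, Finset.mem_filter.mpr ⟨Finset.mem_attach _ _, hea⟩,
                by rw [← hfx, ← hie, hfe]⟩
            · exact absurd (by rw [hfe]; simp) hnr
        · intro hy
          obtain ⟨e, he, hey⟩ := Finset.mem_image.mp hy
          obtain ⟨-, hea⟩ := Finset.mem_filter.mp he
          obtain ⟨x, hx⟩ := hbij.surjective (Sum.inl e)
          refine Finset.mem_image.mpr ⟨x, ?_, by rw [hx]; exact hey⟩
          rcases x with ai | e'
          · obtain ⟨e'', h1, h2⟩ := fact1 ai.1 ai.2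
            rw [hx] at h1
            have he'' : e'' = e := Sum.inl_injective h1.symm
            apply Finset.mem_union_left
            refine Finset.mem_image.mpr ⟨ai.2, Finset.mem_univ _, ?_⟩
            have hai : ai.1 = a := by rw [← h2, he'', hea]
            rw [← hai]
          · rcases fact2 e' with hfe | ⟨j, hfe⟩
            · rw [hx] at hfe
              have he' : e' = e := (Sum.inl_injective hfe).symm
              apply Finset.mem_union_right
              refine Finset.mem_image.mpr ⟨e', Finset.mem_filter.mpr
                ⟨Finset.mem_attach _ _, ?_, ?_⟩, rfl⟩
              · rw [he', hea]
              · rw [hx]; simp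
            · rw [hx] at hfe
              exact absurd hfe (by simp)
      have hinjl : Function.Injective
          (fun i : Fin r => (Sum.inl (a, i) : (A × Fin r) ⊕ {x // x ∈ E})) := by
        intro i j hij
        simpa using hij
      have hdisj : Disjoint
          ((Finset.univ : Finset (Fin r)).image
            (fun i => (Sum.inl (a, i) : (A × Fin r) ⊕ {x // x ∈ E})))
          ((E.attach.filter (fun e => e.1.1 = a ∧ ¬ (f (Sum.inr e)).isRight)).image Sum.inr) := by
        simp only [Finset.disjoint_left, Finset.mem_image]
        rintro x ⟨i, -, hi⟩ ⟨e, -, he⟩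
        rw [← hi] at he
        exact Sum.inl_ne_inr he.symm
      have hcard1 : Za.card = r +
          (E.attach.filter (fun e => e.1.1 = a ∧ ¬ (f (Sum.inr e)).isRight)).card := by
        rw [hZa, Finset.card_union_of_disjoint hdisj,
          Finset.card_image_of_injective _ hinjl,
          Finset.card_image_of_injective _ Sum.inr_injective, Finset.card_univ, Fintype.card_fin]
      have hcard2 : (Za.image f).card = Za.card :=
        Finset.card_image_of_injective _ hbij.injective
      have hcard3 : ((E.attach.filter (fun e => e.1.1 = a)).image
          (Sum.inl : {x // x ∈ E} → {x // x ∈ E} ⊕ (B × Fin r))).card =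
          (E.attach.filter (fun e => e.1.1 = a)).card :=
        Finset.card_image_of_injective _ Sum.inl_injective
      have hsplit : (E.attach.filter (fun e => e.1.1 = a ∧ (f (Sum.inr e)).isRight)).card +
          (E.attach.filter (fun e => e.1.1 = a ∧ ¬ (f (Sum.inr e)).isRight)).card =
          (E.attach.filter (fun e => e.1.1 = a)).card := by
        rw [← Finset.filter_filter, ← Finset.filter_filter,
          Finset.card_filter_add_card_filter_not]
      have hcomm : (E.attach.filter (fun e => (f (Sum.inr e)).isRight ∧ e.1.1 = a)) =
          (E.attach.filter (fun e => e.1.1 = a ∧ (f (Sum.inr e)).isRight)) := by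
        apply Finset.filter_congr
        intro e _
        constructor <;> (rintro ⟨h1, h2⟩; exact ⟨h2, h1⟩)
      rw [hFacard, hcomm]
      rw [himg, hcard1] at hcard2
      omega
    · -- degree r at every b
      intro b
      have hFb : F.filter (fun p => p.2 = b) =
          (E.attach.filter (fun e => (f (Sum.inr e)).isRight ∧ e.1.2 = b)).image Subtype.val := by
        rw [hF, Finset.filter_image, Finset.filter_filter]
      have hFbcard : (F.filter (fun p => p.2 = b)).card =
          (E.attach.filter (fun e => (f (Sum.inr e)).isRight ∧ e.1.2 = b)).card := by
        rw [hFb, Finset.card_image_of_injective _ Subtype.val_injective]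
      have himg : (E.attach.filter (fun e => (f (Sum.inr e)).isRight ∧ e.1.2 = b)).image
          (fun e => f (Sum.inr e)) =
          (Finset.univ : Finset (Fin r)).image (fun j => Sum.inr (b, j)) := by
        ext y
        constructor
        · intro hy
          obtain ⟨e, he, hey⟩ := Finset.mem_image.mp hy
          obtain ⟨-, hr, heb⟩ := Finset.mem_filter.mp he
          rcases fact2 e with hfe | ⟨j, hfe⟩
          · rw [hfe] at hr; simp at hr
          · refine Finset.mem_image.mpr ⟨j, Finset.mem_univ _, ?_⟩
            rw [← hey, hfe, heb]
        · intro hy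
          obtain ⟨j, -, hj⟩ := Finset.mem_image.mp hy
          obtain ⟨x, hx⟩ := hbij.surjective (Sum.inr (b, j))
          rcases x with ai | e
          · obtain ⟨e'', h1, -⟩ := fact1 ai.1 ai.2
            rw [hx] at h1
            exact absurd h1 (by simp)
          · rcases fact2 e with hfe | ⟨j', hfe⟩
            · rw [hx] at hfe
              exact absurd hfe (by simp)
            · rw [hx] at hfe
              have hpair : (e.1.2, j') = (b, j) := Sum.inr_injective hfe.symm
              refine Finset.mem_image.mpr ⟨e, Finset.mem_filter.mpr
                ⟨Finset.mem_attach _ _, ?_, congrArg Prod.fst hpair⟩, by rw [hx]; exact hj⟩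
              rw [hx]; simp
      have hinj : Function.Injective (fun e : {x // x ∈ E} => f (Sum.inr e)) :=
        fun e1 e2 he => Sum.inr_injective (hbij.injective he)
      have hc1 : ((E.attach.filter (fun e => (f (Sum.inr e)).isRight ∧ e.1.2 = b)).image
          (fun e => f (Sum.inr e))).card =
          (E.attach.filter (fun e => (f (Sum.inr e)).isRight ∧ e.1.2 = b)).card :=
        Finset.card_image_of_injective _ hinj
      have hc2 : ((Finset.univ : Finset (Fin r)).image
          (fun j => (Sum.inr (b, j) : {x // x ∈ E} ⊕ (B × Fin r)))).card = r := by
        rw [Finset.card_image_of_injective, Finset.card_univ, Fintype.card_fin]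
        intro i j hij
        simpa using hij
      rw [hFbcard, ← hc1, himg, hc2]
end

section
/- If a bipartite graph G with parts A, B of equal size n satisfies e_G(X,Y) ≥ r(|X| + |Y| − n) for all X ⊆ A and Y ⊆ B, then G contains r pairwise edge-disjoint perfect matchings. -/
set_option linter.unusedSectionVars false
set_option maxHeartbeats 1000000

namespace Stmt3Aux

variable {A B : Type*} [Fintype A] [Fintype B] [DecidableEq A] [DecidableEq B]

def rdeg (H : Finset (A × B)) (a : A) : ℕ := (H.filter (fun e => e.1 = a)).card
def cdeg (H : Finset (A × B)) (b : B) : ℕ := (H.filter (fun e => e.2 = b)).card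

lemma sum_rdeg (H : Finset (A × B)) (X : Finset A) :
    ∑ a ∈ X, rdeg H a = (H.filter (fun e => e.1 ∈ X)).card := by
  rw [Finset.card_eq_sum_card_fiberwise (f := Prod.fst) (s := H.filter (fun e => e.1 ∈ X)) (t := X)
    (fun e he => (Finset.mem_filter.mp he).2)]
  apply Finset.sum_congr rfl
  intro a ha
  unfold rdeg
  congr 1
  rw [Finset.filter_filter]
  apply Finset.filter_congr
  intro e _
  exact ⟨fun h => ⟨h ▸ ha, h⟩, And.right⟩

lemma sum_cdeg (H : Finset (A × B)) (Y : Finset B) :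
    ∑ b ∈ Y, cdeg H b = (H.filter (fun e => e.2 ∈ Y)).card := by
  rw [Finset.card_eq_sum_card_fiberwise (f := Prod.snd) (s := H.filter (fun e => e.2 ∈ Y)) (t := Y)
    (fun e he => (Finset.mem_filter.mp he).2)]
  apply Finset.sum_congr rfl
  intro b hb
  unfold cdeg
  congr 1
  rw [Finset.filter_filter]
  apply Finset.filter_congr
  intro e _
  exact ⟨fun h => ⟨h ▸ hb, h⟩, And.right⟩

/-- duplicate in image of `f` gives a split of the list. -/
lemma exists_dup_split {α β : Type*} (f : α → β) :
    ∀ (l : List α), ¬ (l.map f).Nodup →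
      ∃ u x w y v, l = u ++ x :: w ++ y :: v ∧ f x = f y := by
  intro l
  induction l with
  | nil => simp
  | cons c t ih =>
    intro hl
    rw [List.map_cons, List.nodup_cons] at hl
    by_cases hc : f c ∈ t.map f
    · obtain ⟨y, hy, hfy⟩ := List.mem_map.1 hc
      obtain ⟨w, v, rfl⟩ := List.append_of_mem hy
      exact ⟨[], c, w, y, v, by simp, hfy.symm⟩
    · have h2 : ¬ (t.map f).Nodup := fun h => hl ⟨hc, h⟩
      obtain ⟨u, x, w, y, v, rfl, hxy⟩ := ih h2
      exact ⟨c :: u, x, w, y, v, by simp, hxy⟩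

section Walks

variable (E : Finset (A × B)) (r : ℕ)

def IsWalk (H : Finset (A × B)) (q : List (A × B)) : Prop :=
  q ≠ [] ∧ (∀ e ∈ q, e ∈ E ∧ e ∉ H) ∧
    q.Chain' (fun e f => (e.1, f.2) ∈ H) ∧
    ∀ e ∈ q.getLast?, rdeg H e.1 < r

def IsAug (H : Finset (A × B)) (q : List (A × B)) : Prop :=
  IsWalk E r H q ∧ ∀ e ∈ q.head?, cdeg H e.2 < r

variable {E r}

lemma surgeryB {H : Finset (A × B)} {u w v : List (A × B)} {x y : A × B} (hxy : x.2 = y.2)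
    (h : IsAug E r H (u ++ x :: w ++ y :: v)) : IsAug E r H (u ++ y :: v) := by
  obtain ⟨⟨hne, hmem, hchain, hlast⟩, hhead⟩ := h
  have hsplit := List.isChain_append.1 hchain
  have hju := hsplit.2.2
  have hcu : (u ++ x :: w).Chain' (fun e f => (e.1, f.2) ∈ H) := hsplit.1
  have hcyv : (y :: v).Chain' (fun e f => (e.1, f.2) ∈ H) := hsplit.2.1
  refine ⟨⟨by simp, ?_, ?_, ?_⟩, ?_⟩
  · intro e he
    apply hmem
    simp only [List.mem_append, List.mem_cons] at he ⊢
    tauto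
  · apply List.IsChain.append ((List.isChain_append.1 hcu).1) hcyv
    intro p hp z hz
    simp only [List.head?_cons, Option.mem_def, Option.some.injEq] at hz
    subst hz
    have := (List.isChain_append.1 hcu).2.2 p hp x (by simp)
    simpa [← hxy] using this
  · intro e he
    apply hlast
    rw [List.getLast?_append_cons] at he
    rw [List.getLast?_append_cons]
    exact he
  · intro e he
    cases u with
    | nil =>
      simp only [List.nil_append, List.head?_cons, Option.mem_def, Option.some.injEq] at he
      subst he
      have := hhead x (by simp)
      rwa [hxy] at this
    | cons c u' =>
      apply hhead
      rw [List.head?_append_of_ne_nil _ (by simp)] at he ⊢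
      exact he

lemma surgeryA {H : Finset (A × B)} {u w v : List (A × B)} {x y : A × B} (hxy : x.1 = y.1)
    (h : IsAug E r H (u ++ x :: w ++ y :: v)) : IsAug E r H (u ++ x :: v) := by
  obtain ⟨⟨hne, hmem, hchain, hlast⟩, hhead⟩ := h
  have hsplit := List.isChain_append.1 hchain
  have hcu : (u ++ x :: w).Chain' (fun e f => (e.1, f.2) ∈ H) := hsplit.1
  have hcyv : (y :: v).Chain' (fun e f => (e.1, f.2) ∈ H) := hsplit.2.1
  refine ⟨⟨by simp, ?_, ?_, ?_⟩, ?_⟩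
  · intro e he
    apply hmem
    simp only [List.mem_append, List.mem_cons] at he ⊢
    tauto
  · apply List.IsChain.append ((List.isChain_append.1 hcu).1)
    · rw [List.isChain_cons]
      constructor
      · intro z hz
        have := (List.isChain_cons.1 hcyv).1 z hz
        simpa [hxy] using this
      · exact (List.isChain_cons.1 hcyv).2
    · intro p hp z hz
      simp only [List.head?_cons, Option.mem_def, Option.some.injEq] at hz
      subst hz
      exact (List.isChain_append.1 hcu).2.2 p hp x (by simp)
  · intro e he
    cases v with
    | nil =>
      simp only [List.getLast?_append_cons, List.getLast?_singleton, Option.mem_def,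
        Option.some.injEq] at he
      subst he
      have := hlast y (by rw [List.getLast?_append_cons]; simp)
      rwa [hxy]
    | cons c v' =>
      apply hlast
      rw [List.getLast?_append_cons] at he ⊢
      rw [List.getLast?_cons_cons] at he
      rw [List.getLast?_cons_cons]
      exact he
  · intro e he
    cases u with
    | nil =>
      simp only [List.nil_append, List.head?_cons, Option.mem_def, Option.some.injEq] at he
      subst he
      exact hhead _ (by simp)
    | cons c u' =>
      apply hhead
      rw [List.head?_append_of_ne_nil _ (by simp)] at he ⊢
      exact he

lemma exists_nodup_aug {H : Finset (A × B)} (hex : ∃ q, IsAug E r H q) :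
    ∃ q, IsAug E r H q ∧ (q.map Prod.fst).Nodup ∧ (q.map Prod.snd).Nodup := by
  obtain ⟨q, hq⟩ := hex
  suffices hS : ∀ (m : ℕ) (q : List (A × B)), q.length = m → IsAug E r H q →
      ∃ q', IsAug E r H q' ∧ (q'.map Prod.fst).Nodup ∧ (q'.map Prod.snd).Nodup by
    exact hS q.length q rfl hq
  intro m
  induction m using Nat.strong_induction_on with
  | _ m ih =>
    intro q hlen hq
    by_cases h1 : (q.map Prod.fst).Nodup
    · by_cases h2 : (q.map Prod.snd).Nodup
      · exact ⟨q, hq, h1, h2⟩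
      · obtain ⟨u, x, w, y, v, rfl, hxy⟩ := exists_dup_split Prod.snd q h2
        refine ih (u ++ y :: v).length ?_ _ rfl (surgeryB hxy hq)
        subst hlen; simp
    · obtain ⟨u, x, w, y, v, rfl, hxy⟩ := exists_dup_split Prod.fst q h1
      refine ih (u ++ x :: v).length ?_ _ rfl (surgeryA hxy hq)
      subst hlen; simp

def links : List (A × B) → List (A × B)
  | e :: f :: t => (e.1, f.2) :: links (f :: t)
  | _ => []

lemma links_subset (H : Finset (A × B)) :
    ∀ (q : List (A × B)), q.Chain' (fun e f => (e.1, f.2) ∈ H) → ∀ x ∈ links q, x ∈ H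
  | [] => by simp [links]
  | [e] => by simp [links]
  | e :: f :: t => fun h x hx => by
    unfold List.Chain' at h
    rw [List.isChain_cons_cons] at h
    simp only [links, List.mem_cons] at hx
    rcases hx with rfl | hx
    · exact h.1
    · exact links_subset H (f :: t) h.2 x hx

lemma map_fst_links : ∀ (q : List (A × B)), (links q).map Prod.fst = (q.map Prod.fst).dropLast
  | [] => rfl
  | [e] => rfl
  | e :: f :: t => by
    simp only [links, List.map_cons]
    rw [map_fst_links (f :: t)]
    simp [List.dropLast_cons₂]

lemma map_snd_links : ∀ (q : List (A × B)), (links q).map Prod.snd = (q.map Prod.snd).tail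
  | [] => rfl
  | [e] => rfl
  | e :: f :: t => by
    simp only [links, List.map_cons, List.map_cons, List.tail_cons]
    rw [map_snd_links (f :: t)]
    simp

lemma length_links : ∀ (q : List (A × B)), q ≠ [] → (links q).length + 1 = q.length
  | [] => by simp
  | [e] => by simp [links]
  | e :: f :: t => fun _ => by
    simp only [links, List.length_cons]
    rw [length_links (f :: t) (by simp)]
    simp

lemma card_filter_toFinset {α β : Type*} [DecidableEq α] [DecidableEq β]
    (f : α → β) (l : List α) (h : (l.map f).Nodup) (b : β) :
    (l.toFinset.filter (fun e => f e = b)).card = if b ∈ l.map f then 1 else 0 := by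
  induction l with
  | nil => simp
  | cons c t ih =>
    rw [List.map_cons, List.nodup_cons] at h
    rw [List.toFinset_cons, Finset.filter_insert]
    by_cases hc : f c = b
    · rw [if_pos hc]
      have hct : c ∉ t.toFinset.filter (fun e => f e = b) := by
        intro hmem
        rw [Finset.mem_filter, List.mem_toFinset] at hmem
        exact h.1 (List.mem_map.2 ⟨c, hmem.1, rfl⟩)
      rw [Finset.card_insert_of_notMem hct, ih h.2]
      have hb : b ∉ t.map f := hc ▸ h.1
      rw [if_neg hb, if_pos (by simp [hc])]
    · rw [if_neg hc, ih h.2]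
      have : (b ∈ f c :: t.map f) ↔ (b ∈ t.map f) := by
        simp only [List.mem_cons]
        constructor
        · rintro (rfl | hh)
          · exact absurd rfl hc
          · exact hh
        · exact Or.inr
      rw [List.map_cons, if_congr this rfl rfl]

lemma flip {H : Finset (A × B)} (hHE : H ⊆ E) (hrd : ∀ a, rdeg H a ≤ r)
    (hcd : ∀ b, cdeg H b ≤ r) {q : List (A × B)} (hq : IsAug E r H q)
    (hna : (q.map Prod.fst).Nodup) (hnb : (q.map Prod.snd).Nodup) :
    ∃ H', H' ⊆ E ∧ (∀ a, rdeg H' a ≤ r) ∧ (∀ b, cdeg H' b ≤ r) ∧ H.card < H'.card := by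
  classical
  obtain ⟨⟨hne, hmem, hchain, hlast⟩, hhead⟩ := hq
  have hqnd : q.Nodup := List.Nodup.of_map Prod.fst hna
  set L : Finset (A × B) := (links q).toFinset with hL
  set T : Finset (A × B) := q.toFinset with hT
  have hLsub : L ⊆ H := by
    intro x hx
    rw [hL, List.mem_toFinset] at hx
    exact links_subset H q hchain x hx
  have hTd : ∀ e ∈ T, e ∉ H := by
    intro e he
    rw [hT, List.mem_toFinset] at he
    exact (hmem e he).2
  have hkey : ∀ (p : A × B → Prop) [DecidablePred p],
      (((H \ L) ∪ T).filter p).card + (L.filter p).card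
        = (H.filter p).card + (T.filter p).card := by
    intro p _
    have h1 : ((H \ L) ∪ T).filter p = ((H.filter p) \ (L.filter p)) ∪ (T.filter p) := by
      ext e
      simp only [Finset.mem_filter, Finset.mem_union, Finset.mem_sdiff]
      tauto
    have hsub : L.filter p ⊆ H.filter p := Finset.filter_subset_filter _ hLsub
    have hdisj : Disjoint ((H.filter p) \ (L.filter p)) (T.filter p) := by
      rw [Finset.disjoint_left]
      intro e he heT
      exact hTd e (Finset.mem_filter.1 heT).1 ((Finset.mem_filter.1 (Finset.mem_sdiff.1 he).1).1)
    rw [h1, Finset.card_union_of_disjoint hdisj, Finset.card_sdiff_of_subset hsub]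
    have := Finset.card_le_card hsub
    omega
  have hndL1 : ((links q).map Prod.fst).Nodup := by
    rw [map_fst_links]; exact (List.dropLast_sublist _).nodup hna
  have hndL2 : ((links q).map Prod.snd).Nodup := by
    rw [map_snd_links]; exact (List.tail_sublist _).nodup hnb
  have cT1 : ∀ a : A, (T.filter (fun e => e.1 = a)).card
      = if a ∈ q.map Prod.fst then 1 else 0 := fun a => card_filter_toFinset Prod.fst q hna a
  have cT2 : ∀ b : B, (T.filter (fun e => e.2 = b)).card
      = if b ∈ q.map Prod.snd then 1 else 0 := fun b => card_filter_toFinset Prod.snd q hnb b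
  have cL1 : ∀ a : A, (L.filter (fun e => e.1 = a)).card
      = if a ∈ (q.map Prod.fst).dropLast then 1 else 0 := by
    intro a
    have := card_filter_toFinset Prod.fst (links q) hndL1 a
    rwa [map_fst_links] at this
  have cL2 : ∀ b : B, (L.filter (fun e => e.2 = b)).card
      = if b ∈ (q.map Prod.snd).tail then 1 else 0 := by
    intro b
    have := card_filter_toFinset Prod.snd (links q) hndL2 b
    rwa [map_snd_links] at this
  refine ⟨(H \ L) ∪ T, ?_, ?_, ?_, ?_⟩
  · apply Finset.union_subset (Finset.sdiff_subset.trans hHE)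
    intro e he
    exact (hmem e (List.mem_toFinset.1 he)).1
  · intro a
    have hk := hkey (fun e => e.1 = a)
    rw [cL1, cT1] at hk
    have hFne : q.map Prod.fst ≠ [] := by
      simp only [ne_eq, List.map_eq_nil_iff]
      exact hne
    by_cases ha : a ∈ q.map Prod.fst
    · by_cases ha' : a ∈ (q.map Prod.fst).dropLast
      · rw [if_pos ha', if_pos ha] at hk
        have := hrd a
        unfold rdeg at *
        omega
      · have hdef : rdeg H a < r := by
          have h1 : q.getLast? = some (q.getLast hne) := List.getLast?_eq_getLast_of_ne_nil hne
          have h2 : (q.map Prod.fst).getLast hFne = a := by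
            have hsp := List.dropLast_append_getLast hFne
            have ha2 := ha
            rw [← hsp, List.mem_append, List.mem_singleton] at ha2
            rcases ha2 with h | h
            · exact absurd h ha'
            · exact h.symm
          have h3 : (q.map Prod.fst).getLast? = some ((q.getLast hne).1) := by
            rw [List.getLast?_map, h1]
            rfl
          have h4 : (q.map Prod.fst).getLast? = some ((q.map Prod.fst).getLast hFne) :=
            List.getLast?_eq_getLast_of_ne_nil hFne
          rw [h4] at h3
          have h5 : (q.getLast hne).1 = a := by
            injection h3 with h3'
            rw [← h2, h3']
          rw [← h5]
          exact hlast (q.getLast hne) h1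
        rw [if_neg ha', if_pos ha] at hk
        unfold rdeg at *
        omega
    · have ha' : a ∉ (q.map Prod.fst).dropLast :=
        fun h => ha ((List.dropLast_sublist _).subset h)
      rw [if_neg ha', if_neg ha] at hk
      have := hrd a
      unfold rdeg at *
      omega
  · intro b
    have hk := hkey (fun e => e.2 = b)
    rw [cL2, cT2] at hk
    obtain ⟨h0, t, rfl⟩ : ∃ h0 t, q = h0 :: t := by
      cases q with
      | nil => exact absurd rfl hne
      | cons h0 t => exact ⟨h0, t, rfl⟩
    have hh0 : cdeg H h0.2 < r := hhead h0 rfl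
    simp only [List.map_cons, List.tail_cons] at hk
    by_cases hb : b ∈ t.map Prod.snd
    · rw [if_pos hb, if_pos (List.mem_cons_of_mem _ hb)] at hk
      have := hcd b
      unfold cdeg at *
      omega
    · by_cases hb0 : b = h0.2
      · rw [if_neg hb, if_pos (by rw [hb0]; exact List.mem_cons_self)] at hk
        subst hb0
        unfold cdeg at *
        omega
      · rw [if_neg hb, if_neg (by simp only [List.mem_cons]; tauto)] at hk
        have := hcd b
        unfold cdeg at *
        omega
  · have hk := hkey (fun _ => True)
    rw [Finset.filter_true, Finset.filter_true, Finset.filter_true, Finset.filter_true] at hk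
    have hTcard : T.card = q.length := List.toFinset_card_of_nodup hqnd
    have hLcard : L.card = (links q).length :=
      List.toFinset_card_of_nodup (List.Nodup.of_map Prod.snd hndL2)
    have hlen := length_links q hne
    have hql : 1 ≤ q.length := by
      cases q with
      | nil => exact absurd rfl hne
      | cons h0 t => simp
    omega

lemma walk_singleton {H : Finset (A × B)} {x : A × B} (hx : x ∈ E) (hxH : x ∉ H)
    (hdef : rdeg H x.1 < r) : IsWalk E r H [x] := by
  refine ⟨by simp, by simp [hx, hxH], List.isChain_singleton _, ?_⟩
  intro e he
  simp only [List.getLast?_singleton, Option.mem_def, Option.some.injEq] at he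
  subst he
  exact hdef

lemma walk_extend {H : Finset (A × B)} {q : List (A × B)} (hq : IsWalk E r H q)
    {e₀ : A × B} (hh : q.head? = some e₀) {a : A} {b : B} (haH : (a, e₀.2) ∈ H)
    (hab : (a, b) ∈ E) (habH : (a, b) ∉ H) : IsWalk E r H ((a, b) :: q) := by
  obtain ⟨hne, hmem, hchain, hlast⟩ := hq
  refine ⟨by simp, ?_, ?_, ?_⟩
  · intro e he
    rcases List.mem_cons.1 he with rfl | he
    · exact ⟨hab, habH⟩
    · exact hmem e he
  · unfold List.Chain'
    rw [List.isChain_cons]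
    refine ⟨?_, hchain⟩
    intro z hz
    rw [hh, Option.mem_def, Option.some.injEq] at hz
    subst hz
    exact haH
  · intro e he
    apply hlast
    have : (a, b) :: q = [(a, b)] ++ q := rfl
    rwa [this, List.getLast?_append_of_ne_nil _ hne] at he

lemma exists_rfactor (n : ℕ) (hA : Fintype.card A = n) (hB : Fintype.card B = n)
    {E : Finset (A × B)} {r : ℕ}
    (hGR : ∀ (X : Finset A) (Y : Finset B),
      (r : ℤ) * ((X.card : ℤ) + (Y.card : ℤ) - (n : ℤ)) ≤
        ((E.filter (fun e => e.1 ∈ X ∧ e.2 ∈ Y)).card : ℤ)) :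
    ∃ H, H ⊆ E ∧ (∀ a, rdeg H a = r) ∧ (∀ b, cdeg H b = r) := by
  classical
  set S := E.powerset.filter (fun H => (∀ a, rdeg H a ≤ r) ∧ (∀ b, cdeg H b ≤ r)) with hS
  have hSne : S.Nonempty := ⟨∅, Finset.mem_filter.2 ⟨Finset.empty_mem_powerset _, fun a => by simp [rdeg], fun b => by simp [cdeg]⟩⟩
  obtain ⟨H, hHS, hmax⟩ := S.exists_max_image Finset.card hSne
  rw [hS, Finset.mem_filter, Finset.mem_powerset] at hHS
  obtain ⟨hHE, hrd, hcd⟩ := hHS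
  have hsum : ∑ a, rdeg H a = H.card := by
    have h := sum_rdeg H Finset.univ
    simpa using h
  have hsumc : ∑ b, cdeg H b = H.card := by
    have h := sum_cdeg H Finset.univ
    simpa using h
  have hcards : H.card ≤ r * n := by
    rw [← hsum]
    calc ∑ a, rdeg H a ≤ ∑ _a : A, r := Finset.sum_le_sum (fun a _ => hrd a)
    _ = r * n := by rw [Finset.sum_const, smul_eq_mul, Finset.card_univ, hA, mul_comm]
  suffices hcard : H.card = r * n by
    refine ⟨H, hHE, ?_, ?_⟩
    · intro a
      by_contra hne'
      have hlt : rdeg H a < r := lt_of_le_of_ne (hrd a) hne'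
      have : ∑ a, rdeg H a < ∑ _a : A, r :=
        Finset.sum_lt_sum (fun a _ => hrd a) ⟨a, Finset.mem_univ a, hlt⟩
      rw [hsum, Finset.sum_const, smul_eq_mul, Finset.card_univ, hA, mul_comm, hcard] at this
      omega
    · intro b
      by_contra hne'
      have hlt : cdeg H b < r := lt_of_le_of_ne (hcd b) hne'
      have : ∑ b, cdeg H b < ∑ _b : B, r :=
        Finset.sum_lt_sum (fun b _ => hcd b) ⟨b, Finset.mem_univ b, hlt⟩
      rw [hsumc, Finset.sum_const, smul_eq_mul, Finset.card_univ, hB, mul_comm, hcard] at this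
      omega
  by_contra hne'
  have hlt : H.card < r * n := lt_of_le_of_ne hcards hne'
  have hdef : ∃ a, rdeg H a < r := by
    by_contra h
    push_neg at h
    have heq : ∀ a, rdeg H a = r := fun a => le_antisymm (hrd a) (h a)
    have : ∑ a, rdeg H a = ∑ _a : A, r := Finset.sum_congr rfl (fun a _ => heq a)
    rw [hsum, Finset.sum_const, smul_eq_mul, Finset.card_univ, hA, mul_comm] at this
    omega
  by_cases haug : ∃ q, IsAug E r H q
  · obtain ⟨q, hq, hna, hnb⟩ := exists_nodup_aug haug
    obtain ⟨H', hH'E, hrd', hcd', hcardlt⟩ := flip hHE hrd hcd hq hna hnb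
    have hmem' : H' ∈ S :=
      Finset.mem_filter.2 ⟨Finset.mem_powerset.2 hH'E, hrd', hcd'⟩
    have := hmax H' hmem'
    omega
  · set RB : B → Prop := fun b => ∃ q e, IsWalk E r H q ∧ q.head? = some e ∧ e.2 = b with hRB
    set X : Finset A := Finset.univ.filter
      (fun a => rdeg H a < r ∨ ∃ b, RB b ∧ (a, b) ∈ H) with hX
    set Y : Finset B := Finset.univ.filter RB with hY
    have h4 : ∀ b ∈ Y, cdeg H b = r := by
      intro b hb
      rw [hY, Finset.mem_filter] at hb
      obtain ⟨q, e, hw, hh, he2⟩ := hb.2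
      by_contra hne2
      have hlt2 : cdeg H b < r := lt_of_le_of_ne (hcd b) hne2
      refine haug ⟨q, hw, ?_⟩
      intro e' he'
      rw [hh, Option.mem_def, Option.some.injEq] at he'
      subst he'
      rwa [he2]
    have h2 : ∀ a ∈ X, ∀ b, (a, b) ∈ E → (a, b) ∉ H → RB b := by
      intro a ha b habE habH
      rw [hX, Finset.mem_filter] at ha
      rcases ha.2 with hdefa | ⟨b', ⟨q, e, hw, hh, he2⟩, hb'H⟩
      · exact ⟨[(a, b)], (a, b), walk_singleton habE habH hdefa, rfl, rfl⟩
      · exact ⟨(a, b) :: q, (a, b),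
          walk_extend hw hh (by rw [he2]; exact hb'H) habE habH, rfl, rfl⟩
    have h3 : ∀ e ∈ H, RB e.2 → e.1 ∈ X := by
      intro e heH hRBe
      rw [hX, Finset.mem_filter]
      exact ⟨Finset.mem_univ _, Or.inr ⟨e.2, hRBe, heH⟩⟩
    obtain ⟨a₀, ha₀⟩ := hdef
    have ha₀X : a₀ ∈ X := by
      rw [hX, Finset.mem_filter]
      exact ⟨Finset.mem_univ _, Or.inl ha₀⟩
    have S7 : ∑ a ∈ X, rdeg H a < r * X.card := by
      calc ∑ a ∈ X, rdeg H a < ∑ _a ∈ X, r :=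
            Finset.sum_lt_sum (fun a _ => hrd a) ⟨a₀, ha₀X, ha₀⟩
      _ = r * X.card := by rw [Finset.sum_const, smul_eq_mul, mul_comm]
    have S0 : ∑ a ∈ X, rdeg H a = (H.filter (fun e => e.1 ∈ X)).card := sum_rdeg H X
    set s := H.filter (fun e => e.1 ∈ X) with hs
    have S1 : (s.filter (fun e => e.2 ∈ Y)).card + (s.filter (fun e => ¬ e.2 ∈ Y)).card
        = s.card := Finset.card_filter_add_card_filter_not _
    have S2 : s.filter (fun e => e.2 ∈ Y) = H.filter (fun e => e.2 ∈ Y) := by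
      ext e
      rw [hs, Finset.filter_filter]
      simp only [Finset.mem_filter]
      constructor
      · rintro ⟨h1, _, h3'⟩
        exact ⟨h1, h3'⟩
      · rintro ⟨h1, h2'⟩
        refine ⟨h1, h3 e h1 ?_, h2'⟩
        rw [hY, Finset.mem_filter] at h2'
        exact h2'.2
    have S3 : (H.filter (fun e => e.2 ∈ Y)).card = r * Y.card := by
      rw [← sum_cdeg]
      rw [Finset.sum_congr rfl (fun b hb => h4 b hb), Finset.sum_const, smul_eq_mul, mul_comm]
    have S4 : E.filter (fun e => e.1 ∈ X ∧ e.2 ∈ Yᶜ) = s.filter (fun e => ¬ e.2 ∈ Y) := by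
      ext e
      rw [hs, Finset.filter_filter]
      simp only [Finset.mem_filter, Finset.mem_compl]
      constructor
      · rintro ⟨h1, h2', h3'⟩
        refine ⟨?_, h2', h3'⟩
        by_contra heH
        refine h3' ?_
        rw [hY, Finset.mem_filter]
        exact ⟨Finset.mem_univ _, h2 e.1 h2' e.2 h1 heH⟩
      · rintro ⟨h1, h2', h3'⟩
        exact ⟨hHE h1, h2', h3'⟩
    have S5 := hGR X Yᶜ
    rw [S4] at S5
    have S6 : Y.card ≤ n := hB ▸ Finset.card_le_univ Y
    have S6' : (Yᶜ.card : ℤ) = (n : ℤ) - Y.card := by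
      rw [Finset.card_compl, hB]
      push_cast [Nat.cast_sub S6]
      ring
    rw [S6'] at S5
    have hring : (r : ℤ) * ((X.card : ℤ) + ((n : ℤ) - Y.card) - n)
        = (r : ℤ) * X.card - (r : ℤ) * Y.card := by ring
    rw [hring] at S5
    have S23 : (s.filter (fun e => e.2 ∈ Y)).card = r * Y.card := by rw [S2, S3]
    have hN : r * Y.card + (s.filter (fun e => ¬ e.2 ∈ Y)).card < r * X.card := by
      rw [S0] at S7
      omega
    have hNZ : (r : ℤ) * Y.card + ((s.filter (fun e => ¬ e.2 ∈ Y)).card : ℤ)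
        < (r : ℤ) * X.card := by exact_mod_cast hN
    linarith

end Walks

lemma decomp (hcard : Fintype.card A = Fintype.card B) :
    ∀ (r : ℕ) (H : Finset (A × B)), (∀ a, rdeg H a = r) → (∀ b, cdeg H b = r) →
    ∃ M : Fin r → Finset (A × B),
      (∀ i, M i ⊆ H ∧ (∀ a, rdeg (M i) a = 1) ∧ (∀ b, cdeg (M i) b = 1)) ∧
      (∀ i j, i ≠ j → Disjoint (M i) (M j)) := by
  intro r
  induction r with
  | zero => exact fun H _ _ => ⟨fun i => i.elim0, fun i => i.elim0, fun i => i.elim0⟩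
  | succ r ih =>
    intro H hr hc
    -- Hall's condition
    set t : A → Finset B := fun a => (H.filter (fun e => e.1 = a)).image Prod.snd with ht
    have hall : ∀ s : Finset A, s.card ≤ (s.biUnion t).card := by
      intro s
      have h1 : (r+1) * s.card = (H.filter (fun e => e.1 ∈ s)).card := by
        rw [← sum_rdeg]
        simp [hr, mul_comm]
      have h2 : (H.filter (fun e => e.1 ∈ s)).card ≤
          (H.filter (fun e => e.2 ∈ s.biUnion t)).card := by
        apply Finset.card_le_card
        intro e he
        rw [Finset.mem_filter] at he ⊢
        refine ⟨he.1, ?_⟩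
        rw [Finset.mem_biUnion]
        exact ⟨e.1, he.2, Finset.mem_image.mpr ⟨e, Finset.mem_filter.mpr ⟨he.1, rfl⟩, rfl⟩⟩
      have h3 : (H.filter (fun e => e.2 ∈ s.biUnion t)).card = (r+1) * (s.biUnion t).card := by
        rw [← sum_cdeg]
        simp [hc, mul_comm]
      have := h1 ▸ h2
      rw [h3] at this
      exact Nat.le_of_mul_le_mul_left this (Nat.succ_pos r)
    obtain ⟨f, hfinj, hft⟩ := (Finset.all_card_le_biUnion_card_iff_existsInjective' t).mp hall
    have hfH : ∀ a, (a, f a) ∈ H := by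
      intro a
      have := hft a
      rw [ht] at this
      simp only [Finset.mem_image, Finset.mem_filter] at this
      obtain ⟨e, ⟨heH, he1⟩, he2⟩ := this
      have : e = (a, f a) := Prod.ext he1 he2
      rwa [this] at heH
    have hfsurj : Function.Surjective f :=
      ((Fintype.bijective_iff_injective_and_card f).mpr ⟨hfinj, hcard⟩).2
    set M0 : Finset (A × B) := Finset.univ.image (fun a => (a, f a)) with hM0
    have hM0H : M0 ⊆ H := by
      intro e he
      rw [hM0, Finset.mem_image] at he
      obtain ⟨a, _, rfl⟩ := he
      exact hfH a
    have hM0r : ∀ a, rdeg M0 a = 1 := by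
      intro a
      unfold rdeg
      have : M0.filter (fun e => e.1 = a) = {(a, f a)} := by
        ext e
        simp only [Finset.mem_filter, Finset.mem_singleton, hM0, Finset.mem_image,
          Finset.mem_univ, true_and]
        constructor
        · rintro ⟨⟨a', rfl⟩, h2⟩; simp at h2; subst h2; rfl
        · rintro rfl; exact ⟨⟨a, rfl⟩, rfl⟩
      rw [this, Finset.card_singleton]
    have hM0c : ∀ b, cdeg M0 b = 1 := by
      intro b
      obtain ⟨a, rfl⟩ := hfsurj b
      unfold cdeg
      have : M0.filter (fun e => e.2 = f a) = {(a, f a)} := by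
        ext e
        simp only [Finset.mem_filter, Finset.mem_singleton, hM0, Finset.mem_image,
          Finset.mem_univ, true_and]
        constructor
        · rintro ⟨⟨a', rfl⟩, h2⟩
          simp only at h2
          have := hfinj h2
          subst this; rfl
        · rintro rfl; exact ⟨⟨a, rfl⟩, rfl⟩
      rw [this, Finset.card_singleton]
    set H' : Finset (A × B) := H \ M0 with hH'
    have hsplit : ∀ (p : A × B → Prop) [DecidablePred p],
        (H.filter p).card = (H'.filter p).card + (M0.filter p).card := by
      intro p _
      have hfs : (H \ M0).filter p = H.filter p \ M0.filter p := by
        ext e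
        simp only [Finset.mem_filter, Finset.mem_sdiff]
        tauto
      have hle : (M0.filter p).card ≤ (H.filter p).card :=
        Finset.card_le_card (Finset.filter_subset_filter _ hM0H)
      rw [hH', hfs, Finset.card_sdiff_of_subset (Finset.filter_subset_filter _ hM0H)]
      omega
    have hr' : ∀ a, rdeg H' a = r := by
      intro a
      have := hsplit (fun e => e.1 = a)
      have h1 := hr a
      have h2 := hM0r a
      unfold rdeg at *
      omega
    have hc' : ∀ b, cdeg H' b = r := by
      intro b
      have := hsplit (fun e => e.2 = b)
      have h1 := hc b
      have h2 := hM0c b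
      unfold cdeg at *
      omega
    obtain ⟨M, hM, hMdisj⟩ := ih H' hr' hc'
    refine ⟨Fin.cons M0 (fun i => M i), ?_, ?_⟩
    · intro i
      refine Fin.cases ?_ ?_ i
      · exact ⟨hM0H, hM0r, hM0c⟩
      · intro j
        simp only [Fin.cons_succ]
        exact ⟨(hM j).1.trans (Finset.sdiff_subset), (hM j).2.1, (hM j).2.2⟩
    · intro i j hij
      rcases Fin.eq_zero_or_eq_succ i with rfl | ⟨i', rfl⟩ <;>
        rcases Fin.eq_zero_or_eq_succ j with rfl | ⟨j', rfl⟩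
      · exact absurd rfl hij
      · simp only [Fin.cons_zero, Fin.cons_succ]
        exact Finset.disjoint_sdiff.mono_right (hM j').1
      · simp only [Fin.cons_zero, Fin.cons_succ]
        exact (Finset.disjoint_sdiff.mono_right (hM i').1).symm
      · simp only [Fin.cons_succ]
        exact hMdisj i' j' (fun h => hij (congrArg Fin.succ h))


end Stmt3Aux

/-- If a bipartite graph `E ⊆ A × B` with `|A| = |B| = n` satisfies
`e(X,Y) ≥ r(|X| + |Y| − n)` for all `X ⊆ A`, `Y ⊆ B`, then it contains `r`
pairwise edge-disjoint perfect matchings. -/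
theorem stmt3 {A B : Type*} [Fintype A] [Fintype B] [DecidableEq A] [DecidableEq B]
    (n r : ℕ) (hA : Fintype.card A = n) (hB : Fintype.card B = n)
    (E : Finset (A × B))
    (hGR : ∀ (X : Finset A) (Y : Finset B),
      (r : ℤ) * ((X.card : ℤ) + (Y.card : ℤ) - (n : ℤ)) ≤
        ((E.filter (fun e => e.1 ∈ X ∧ e.2 ∈ Y)).card : ℤ)) :
    ∃ M : Fin r → Finset (A × B),
      (∀ i, M i ⊆ E ∧
        (∀ a : A, ((M i).filter (fun e => e.1 = a)).card = 1) ∧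
        (∀ b : B, ((M i).filter (fun e => e.2 = b)).card = 1)) ∧
      (∀ i j, i ≠ j → Disjoint (M i) (M j)) := by
  obtain ⟨H, hHE, hrd, hcd⟩ := Stmt3Aux.exists_rfactor n hA hB hGR
  obtain ⟨M, hM, hdisj⟩ := Stmt3Aux.decomp (hA.trans hB.symm) r H hrd hcd
  exact ⟨M, fun i => ⟨(hM i).1.trans hHE, (hM i).2.1, (hM i).2.2⟩, hdisj⟩
end

section
/- Let k ≥ 2, let α ∈ (0,1], set s = αn and N = kn, and let m_r be the number of elements of [N] appearing exactly r times in s i.i.d. uniform draws from [N]. If r_0 is the smallest positive integer with 2·k^{−r_0} ≤ ε²/2, and α ≥ ε/2, then ∑_{r > r_0} r·E[m_r] ≤ ε·α·n. -/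
open scoped Classical
open Finset

lemma card_const_on (N s r0 : ℕ) (i : Fin s) (T : Finset (Fin s))
    (hi : i ∉ T) (hcard : T.card = r0) :
    (Finset.univ.filter (fun f : Fin s → Fin N => ∀ j ∈ T, f j = f i)).card
      = N ^ (s - r0) := by
  have key : (Finset.univ.filter (fun f : Fin s → Fin N => ∀ j ∈ T, f j = f i)).card
      = (Finset.univ : Finset ({j : Fin s // j ∉ T} → Fin N)).card := by
    apply Finset.card_bij' (fun f _ => fun x => f x.1)
      (fun g _ => fun j => if h : j ∉ T then g ⟨j, h⟩ else g ⟨i, hi⟩)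
    · intro f hf
      simp only [mem_filter, mem_univ, true_and] at hf
      funext j
      by_cases h : j ∈ T
      · simp [h, hf j h]
      · simp [h]
    · intro g hg
      funext x
      simp [x.2]
    · intro f hf
      simp
    · intro g hg
      simp only [mem_filter, mem_univ, true_and]
      intro j hj
      simp [hj, hi]
  rw [key]
  simp only [Finset.card_univ, Fintype.card_fun, Fintype.card_fin]
  congr 1
  rw [Fintype.card_subtype]
  have : (Finset.univ.filter (fun j : Fin s => j ∉ T)) = Finset.univ \ T := by
    ext j; simp
  rw [this, Finset.card_sdiff_of_subset (Finset.subset_univ T), Finset.card_univ, Fintype.card_fin, hcard]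

lemma card_bad_le (N s r0 : ℕ) (i : Fin s) :
    (Finset.univ.filter (fun f : Fin s → Fin N =>
        r0 + 1 ≤ (Finset.univ.filter (fun j => f j = f i)).card)).card
      ≤ (s - 1).choose r0 * N ^ (s - r0) := by
  have hsub : Finset.univ.filter (fun f : Fin s → Fin N =>
        r0 + 1 ≤ (Finset.univ.filter (fun j => f j = f i)).card) ⊆
      (Finset.powersetCard r0 (Finset.univ.erase i)).biUnion
        (fun T => Finset.univ.filter (fun f : Fin s → Fin N => ∀ j ∈ T, f j = f i)) := by
    intro f hf
    simp only [mem_filter, mem_univ, true_and] at hf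
    have hiS : i ∈ Finset.univ.filter (fun j => f j = f i) := by simp
    have hcard : r0 ≤ ((Finset.univ.filter (fun j => f j = f i)).erase i).card := by
      rw [Finset.card_erase_of_mem hiS]; omega
    obtain ⟨T, hTsub, hTcard⟩ := Finset.exists_subset_card_eq hcard
    rw [Finset.mem_biUnion]
    refine ⟨T, ?_, ?_⟩
    · rw [Finset.mem_powersetCard]
      exact ⟨hTsub.trans (Finset.erase_subset_erase i (Finset.filter_subset _ _)), hTcard⟩
    · simp only [mem_filter, mem_univ, true_and]
      intro j hj
      exact (Finset.mem_filter.mp (Finset.mem_of_mem_erase (hTsub hj))).2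
  calc _ ≤ ((Finset.powersetCard r0 (Finset.univ.erase i)).biUnion
        (fun T => Finset.univ.filter (fun f : Fin s → Fin N => ∀ j ∈ T, f j = f i))).card :=
      Finset.card_le_card hsub
    _ ≤ ∑ T ∈ Finset.powersetCard r0 (Finset.univ.erase i),
        (Finset.univ.filter (fun f : Fin s → Fin N => ∀ j ∈ T, f j = f i)).card :=
      Finset.card_biUnion_le
    _ = ∑ T ∈ Finset.powersetCard r0 (Finset.univ.erase i), N ^ (s - r0) := by
      apply Finset.sum_congr rfl
      intro T hT
      rw [Finset.mem_powersetCard] at hT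
      exact card_const_on N s r0 i T (fun h => (Finset.mem_erase.mp (hT.1 h)).1 rfl) hT.2
    _ = (s - 1).choose r0 * N ^ (s - r0) := by
      rw [Finset.sum_const, smul_eq_mul, Finset.card_powersetCard, Finset.card_erase_of_mem
        (Finset.mem_univ i), Finset.card_univ, Fintype.card_fin]

lemma sum_mult_eq (N s r0 : ℕ) (f : Fin s → Fin N) :
    ∑ r ∈ Finset.Icc (r0+1) s, r * (Finset.univ.filter (fun t : Fin N =>
        (Finset.univ.filter (fun i : Fin s => f i = t)).card = r)).card
      = (Finset.univ.filter (fun i : Fin s =>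
          r0 + 1 ≤ (Finset.univ.filter (fun j : Fin s => f j = f i)).card)).card := by
  set cnt : Fin N → ℕ := fun t => (Finset.univ.filter (fun i : Fin s => f i = t)).card with hcnt
  have hle : ∀ t, cnt t ≤ s := fun t => le_trans (Finset.card_filter_le _ _) (by simp)
  set A := Finset.univ.filter (fun t => r0 + 1 ≤ cnt t) with hA
  have h1 : (Finset.univ.filter (fun i : Fin s => r0 + 1 ≤ cnt (f i))).card
      = ∑ t ∈ A, cnt t := by
    rw [Finset.card_eq_sum_card_fiberwise (t := A) (f := f) (fun i hi => by
      simp only [A, Finset.mem_coe, mem_filter, mem_univ, true_and] at *; exact hi)]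
    apply Finset.sum_congr rfl
    intro t ht
    simp only [A, mem_filter, mem_univ, true_and] at ht
    simp only [hcnt]
    congr 1
    ext i
    simp only [Finset.filter_filter, mem_filter, mem_univ, true_and]
    constructor
    · rintro ⟨_, h⟩; exact h
    · intro h; refine ⟨?_, h⟩; rw [h]; exact ht
  have h2 : ∑ t ∈ A, cnt t = ∑ r ∈ Finset.Icc (r0+1) s, r *
      (Finset.univ.filter (fun t => cnt t = r)).card := by
    rw [← Finset.sum_fiberwise_of_maps_to (g := cnt) (fun t ht => by
      simp only [A, mem_filter, mem_univ, true_and] at ht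
      exact Finset.mem_Icc.mpr ⟨ht, hle t⟩)]
    apply Finset.sum_congr rfl
    intro r hr
    have hr' := Finset.mem_Icc.mp hr
    have hAf : A.filter (fun t => cnt t = r) = Finset.univ.filter (fun t => cnt t = r) := by
      ext t
      simp only [hA, Finset.filter_filter, mem_filter, mem_univ, true_and]
      constructor
      · rintro ⟨_, h⟩; exact h
      · intro h; refine ⟨?_, h⟩; omega
    rw [hAf, Finset.sum_congr rfl (fun t ht => (Finset.mem_filter.mp ht).2),
      Finset.sum_const, smul_eq_mul, mul_comm]
  rw [h1, h2]

lemma key_bound (N s r0 : ℕ) :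
    ∑ r ∈ Finset.Icc (r0+1) s, r * (∑ f : Fin s → Fin N,
      (Finset.univ.filter (fun t : Fin N =>
        (Finset.univ.filter (fun i : Fin s => f i = t)).card = r)).card)
    ≤ s * (s ^ r0 * N ^ (s - r0)) := by
  calc ∑ r ∈ Finset.Icc (r0+1) s, r * (∑ f : Fin s → Fin N,
        (Finset.univ.filter (fun t : Fin N =>
          (Finset.univ.filter (fun i : Fin s => f i = t)).card = r)).card)
      = ∑ f : Fin s → Fin N, ∑ r ∈ Finset.Icc (r0+1) s,
          r * (Finset.univ.filter (fun t : Fin N =>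
            (Finset.univ.filter (fun i : Fin s => f i = t)).card = r)).card := by
        rw [Finset.sum_comm]
        exact Finset.sum_congr rfl fun r _ => Finset.mul_sum _ _ _
    _ = ∑ f : Fin s → Fin N, (Finset.univ.filter (fun i : Fin s =>
          r0 + 1 ≤ (Finset.univ.filter (fun j : Fin s => f j = f i)).card)).card := by
        exact Finset.sum_congr rfl fun f _ => sum_mult_eq N s r0 f
    _ = ∑ i : Fin s, (Finset.univ.filter (fun f : Fin s → Fin N =>
          r0 + 1 ≤ (Finset.univ.filter (fun j : Fin s => f j = f i)).card)).card := by
        simp only [Finset.card_filter]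
        exact Finset.sum_comm
    _ ≤ ∑ i : Fin s, (s - 1).choose r0 * N ^ (s - r0) :=
        Finset.sum_le_sum fun i _ => card_bad_le N s r0 i
    _ = s * ((s - 1).choose r0 * N ^ (s - r0)) := by
        rw [Finset.sum_const, smul_eq_mul, Finset.card_univ, Fintype.card_fin]
    _ ≤ s * (s ^ r0 * N ^ (s - r0)) := by
        have : (s - 1).choose r0 ≤ s ^ r0 :=
          le_trans (Nat.choose_le_pow _ _) (Nat.pow_le_pow_left (Nat.sub_le s 1) r0)
        exact Nat.mul_le_mul_left s (Nat.mul_le_mul_right _ this)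


/-- The expected number of elements of `[N]` occurring with multiplicity exactly `r`
among `s` i.i.d. uniform draws from `[N]`. -/
noncomputable def expMult (N s r : ℕ) : ℝ :=
  (∑ f : Fin s → Fin N,
      ((Finset.univ.filter (fun t : Fin N =>
          (Finset.univ.filter (fun i : Fin s => f i = t)).card = r)).card : ℝ)) / N ^ s

/-- With `k ≥ 2`, `α ∈ [ε/2, 1]`, `s = αn` i.i.d. uniform draws from `[kn]`, and
`r₀` the smallest positive integer with `2·k^{−r₀} ≤ ε²/2`, we have
`∑_{r > r₀} r·E[m_r] ≤ ε·α·n`. -/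
theorem stmt12 (n k s r0 : ℕ) (hk : 2 ≤ k) (hn : 0 < n) (ε α : ℝ)
    (hε0 : 0 < ε) (hε1 : ε < 1) (hα1 : α ≤ 1) (hαε : ε / 2 ≤ α)
    (hs : (s : ℝ) = α * n)
    (hr0pos : 0 < r0) (hr0 : 2 * (k : ℝ) ^ (-(r0 : ℤ)) ≤ ε ^ 2 / 2)
    (hr0min : ∀ r : ℕ, 0 < r → r < r0 → ¬(2 * (k : ℝ) ^ (-(r : ℤ)) ≤ ε ^ 2 / 2)) :
    ∑ r ∈ Finset.Icc (r0 + 1) s, (r : ℝ) * expMult (k * n) s r ≤ ε * α * n := by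
  have hα0 : 0 < α := lt_of_lt_of_le (by linarith) hαε
  have hrhs0 : (0:ℝ) ≤ ε * α * n := by positivity
  by_cases hr0s : s < r0 + 1
  · rw [Finset.Icc_eq_empty (by omega), Finset.sum_empty]
    exact hrhs0
  push_neg at hr0s
  have hr0s' : r0 ≤ s := by omega
  set N := k * n with hNdef
  have hN0 : 0 < N := Nat.mul_pos (by omega) hn
  have hNR : (0:ℝ) < (N:ℝ) := by exact_mod_cast hN0
  -- rewrite the sum as a single fraction of a natural number
  have hexp : ∑ r ∈ Finset.Icc (r0 + 1) s, (r : ℝ) * expMult N s r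
      = ((∑ r ∈ Finset.Icc (r0+1) s, r * (∑ f : Fin s → Fin N,
          (Finset.univ.filter (fun t : Fin N =>
            (Finset.univ.filter (fun i : Fin s => f i = t)).card = r)).card) : ℕ) : ℝ)
        / (N:ℝ) ^ s := by
    push_cast
    rw [Finset.sum_div]
    refine Finset.sum_congr rfl fun r _ => ?_
    rw [expMult]
    push_cast
    ring
  rw [hexp]
  have hnum := key_bound N s r0
  have hnumR : ((∑ r ∈ Finset.Icc (r0+1) s, r * (∑ f : Fin s → Fin N,
          (Finset.univ.filter (fun t : Fin N =>
            (Finset.univ.filter (fun i : Fin s => f i = t)).card = r)).card) : ℕ) : ℝ)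
      ≤ (s:ℝ) * ((s:ℝ) ^ r0 * (N:ℝ) ^ (s - r0)) := by
    exact_mod_cast hnum
  have hstep : ((∑ r ∈ Finset.Icc (r0+1) s, r * (∑ f : Fin s → Fin N,
          (Finset.univ.filter (fun t : Fin N =>
            (Finset.univ.filter (fun i : Fin s => f i = t)).card = r)).card) : ℕ) : ℝ)
        / (N:ℝ) ^ s ≤ ((s:ℝ) * ((s:ℝ) ^ r0 * (N:ℝ) ^ (s - r0))) / (N:ℝ) ^ s := by
    gcongr
  refine le_trans hstep ?_
  have hNs : (N:ℝ) ^ s = (N:ℝ) ^ (s - r0) * (N:ℝ) ^ r0 := by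
    rw [← pow_add, Nat.sub_add_cancel hr0s']
  have e2 : ((s:ℝ) * ((s:ℝ) ^ r0 * (N:ℝ) ^ (s - r0))) / (N:ℝ) ^ s
      = (s:ℝ) * ((s:ℝ) / (N:ℝ)) ^ r0 := by
    rw [hNs, div_pow]
    have h1 : (N:ℝ) ^ (s - r0) ≠ 0 := by positivity
    have h2 : (N:ℝ) ^ r0 ≠ 0 := by positivity
    field_simp
  rw [e2]
  -- s / N = α / k
  have hsN : (s:ℝ) / (N:ℝ) = α / (k:ℝ) := by
    have hn' : (n:ℝ) ≠ 0 := by positivity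
    have hk' : (k:ℝ) ≠ 0 := by positivity
    rw [hs, hNdef]
    push_cast
    field_simp
  rw [hsN]
  have hkR : (0:ℝ) < (k:ℝ) := by positivity
  have hpow1 : (α / (k:ℝ)) ^ r0 ≤ ((1:ℝ) / (k:ℝ)) ^ r0 := by
    apply pow_le_pow_left₀ (by positivity)
    gcongr
  have hpow2 : ((1:ℝ) / (k:ℝ)) ^ r0 = (k : ℝ) ^ (-(r0 : ℤ)) := by
    rw [one_div, inv_pow, zpow_neg, zpow_natCast]
  have hpow3 : (α / (k:ℝ)) ^ r0 ≤ ε ^ 2 / 4 := by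
    rw [hpow2] at hpow1
    linarith
  calc (s:ℝ) * (α / (k:ℝ)) ^ r0 ≤ (s:ℝ) * (ε ^ 2 / 4) := by
        apply mul_le_mul_of_nonneg_left hpow3 (by positivity)
    _ ≤ (s:ℝ) * ε := by
        apply mul_le_mul_of_nonneg_left _ (by positivity)
        nlinarith
    _ = ε * α * n := by rw [hs]; ring
end

section
/- Let G = (A ∪ B, E) be a random bipartite graph with |A| = |B| = n where each edge appears independently with probability p = ω(log n / n). Then for every fixed ε > 0, with high probability G contains (1−ε)np pairwise edge-disjoint perfect matchings. -/
open scoped Classical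
open Filter
namespace SB15
variable {n : ℕ}
def cnt (E : Finset (Fin n × Fin n)) (X Y : Finset (Fin n)) : ℕ := (E ∩ X ×ˢ Y).card
def GR (r : ℕ) (E : Finset (Fin n × Fin n)) : Prop :=
  ∀ X Y : Finset (Fin n), (r : ℤ) * (X.card + Y.card - n) ≤ cnt E X Y
def Tight (r : ℕ) (E : Finset (Fin n × Fin n)) (X Y : Finset (Fin n)) : Prop :=
  (cnt E X Y : ℤ) = (r : ℤ) * (X.card + Y.card - n)

lemma cnt_submod (E : Finset (Fin n × Fin n)) (X X' Y Y' : Finset (Fin n)) :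
    cnt E (X ∪ X') (Y ∩ Y') + cnt E (X ∩ X') (Y ∪ Y') ≤ cnt E X Y + cnt E X' Y' := by
  classical
  simp only [cnt, ← Finset.filter_mem_eq_inter, Finset.card_filter, ← Finset.sum_add_distrib]
  refine Finset.sum_le_sum fun f _ => ?_
  by_cases h1 : f.1 ∈ X <;> by_cases h2 : f.1 ∈ X' <;> by_cases h3 : f.2 ∈ Y <;>
    by_cases h4 : f.2 ∈ Y' <;>
    simp [Finset.mem_product, Finset.mem_union, Finset.mem_inter, h1, h2, h3, h4]

lemma tight_combine {r : ℕ} {E : Finset (Fin n × Fin n)} (hGR : GR r E)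
    {X X' Y Y' : Finset (Fin n)} (h : Tight r E X Y) (h' : Tight r E X' Y') :
    Tight r E (X ∩ X') (Y ∪ Y') ∧ Tight r E (X ∪ X') (Y ∩ Y') := by
  have hs := cnt_submod E X X' Y Y'
  have hs' : (cnt E (X ∪ X') (Y ∩ Y') : ℤ) + cnt E (X ∩ X') (Y ∪ Y')
      ≤ (cnt E X Y : ℤ) + cnt E X' Y' := by exact_mod_cast hs
  have g1 := hGR (X ∩ X') (Y ∪ Y')
  have g2 := hGR (X ∪ X') (Y ∩ Y')
  have c1 := Finset.card_union_add_card_inter X X'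
  have c2 := Finset.card_union_add_card_inter Y Y'
  have key : (r : ℤ) * (((X ∩ X').card : ℤ) + (Y ∪ Y').card - n)
      + (r : ℤ) * (((X ∪ X').card : ℤ) + (Y ∩ Y').card - n)
      = (r : ℤ) * ((X.card : ℤ) + Y.card - n) + (r : ℤ) * ((X'.card : ℤ) + Y'.card - n) := by
    rw [← mul_add, ← mul_add]
    congr 1
    omega
  unfold Tight at *
  constructor <;> linarith


-- facts about erasing an edge
lemma cnt_erase_le (E : Finset (Fin n × Fin n)) (f : Fin n × Fin n) (X Y : Finset (Fin n)) :
    cnt E X Y ≤ cnt (E.erase f) X Y + 1 := by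
  classical
  have hsub : E ∩ X ×ˢ Y ⊆ insert f ((E.erase f) ∩ X ×ˢ Y) := by
    intro x hx
    rcases Finset.mem_inter.mp hx with ⟨hxE, hxS⟩
    by_cases hxf : x = f
    · simp [hxf]
    · exact Finset.mem_insert_of_mem (Finset.mem_inter.mpr ⟨Finset.mem_erase.mpr ⟨hxf, hxE⟩, hxS⟩)
  calc cnt E X Y ≤ (insert f ((E.erase f) ∩ X ×ˢ Y)).card := Finset.card_le_card hsub
    _ ≤ cnt (E.erase f) X Y + 1 := Finset.card_insert_le _ _

lemma cnt_erase_eq (E : Finset (Fin n × Fin n)) (f : Fin n × Fin n) (X Y : Finset (Fin n))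
    (hf : f ∉ X ×ˢ Y) : cnt (E.erase f) X Y = cnt E X Y := by
  classical
  unfold cnt
  congr 1
  ext x
  simp only [Finset.mem_inter, Finset.mem_erase]
  constructor
  · rintro ⟨⟨-, h1⟩, h2⟩; exact ⟨h1, h2⟩
  · rintro ⟨h1, h2⟩
    exact ⟨⟨fun hx => hf (hx ▸ h2), h1⟩, h2⟩

lemma cnt_erase_ge (E : Finset (Fin n × Fin n)) (f : Fin n × Fin n) (X Y : Finset (Fin n)) :
    cnt (E.erase f) X Y ≤ cnt E X Y :=
  Finset.card_le_card (Finset.inter_subset_inter_right (Finset.erase_subset _ _))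

-- every edge lies in a tight pair, in the critical case
lemma crit_tight {r : ℕ} {E : Finset (Fin n × Fin n)} (hGR : GR r E)
    {f : Fin n × Fin n} (hf : f ∈ E) (hcrit : ¬ GR r (E.erase f)) :
    ∃ X Y, Tight r E X Y ∧ f.1 ∈ X ∧ f.2 ∈ Y := by
  classical
  rw [GR] at hcrit
  push_neg at hcrit
  obtain ⟨X, Y, hlt⟩ := hcrit
  have hmem : f ∈ X ×ˢ Y := by
    by_contra hmem
    rw [cnt_erase_eq E f X Y hmem] at hlt
    exact absurd (hGR X Y) (not_le.mpr hlt)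
  have h1 := hGR X Y
  have h2 := cnt_erase_le E f X Y
  have h3 := cnt_erase_ge E f X Y
  refine ⟨X, Y, ?_, (Finset.mem_product.mp hmem).1, (Finset.mem_product.mp hmem).2⟩
  unfold Tight
  omega

lemma filterA_eq (E : Finset (Fin n × Fin n)) (a : Fin n) :
    E.filter (fun f => f.1 = a) = E ∩ {a} ×ˢ Finset.univ := by
  ext f
  simp only [Finset.mem_product, Finset.mem_filter, Finset.mem_inter, Finset.mem_singleton,
    Finset.mem_univ, and_true]

lemma filterB_eq (E : Finset (Fin n × Fin n)) (b : Fin n) :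
    E.filter (fun f => f.2 = b) = E ∩ Finset.univ ×ˢ {b} := by
  ext f
  simp only [Finset.mem_product, Finset.mem_filter, Finset.mem_inter, Finset.mem_singleton,
    Finset.mem_univ, true_and]

lemma degA_ge {r : ℕ} {E : Finset (Fin n × Fin n)} (hGR : GR r E) (a : Fin n) :
    r ≤ (E.filter (fun f => f.1 = a)).card := by
  have := hGR {a} Finset.univ
  rw [filterA_eq]
  simp only [Finset.card_singleton, Finset.card_univ, Fintype.card_prod, Fintype.card_fin] at this ⊢
  unfold cnt at this
  omega

lemma degB_ge {r : ℕ} {E : Finset (Fin n × Fin n)} (hGR : GR r E) (b : Fin n) :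
    r ≤ (E.filter (fun f => f.2 = b)).card := by
  have := hGR Finset.univ {b}
  rw [filterB_eq]
  simp only [Finset.card_singleton, Finset.card_univ, Fintype.card_prod, Fintype.card_fin] at this ⊢
  unfold cnt at this
  omega

end SB15

namespace SB15
variable {n : ℕ}

lemma degA_le {r : ℕ} {E : Finset (Fin n × Fin n)} (hGR : GR r E)
    (hcrit : ∀ f ∈ E, ∃ X Y, Tight r E X Y ∧ f.1 ∈ X ∧ f.2 ∈ Y) (a : Fin n) :
    (E.filter (fun f => f.1 = a)).card ≤ r := by
  classical
  by_contra hgt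
  push_neg at hgt
  -- neighbours of a
  set N : Finset (Fin n) := (E.filter (fun f => f.1 = a)).image Prod.snd with hN
  have hNmem : ∀ b ∈ N, (a, b) ∈ E := by
    intro b hb
    obtain ⟨f, hf, hf2⟩ := Finset.mem_image.mp hb
    obtain ⟨hfE, hf1⟩ := Finset.mem_filter.mp hf
    have : f = (a, b) := Prod.ext hf1 hf2
    exact this ▸ hfE
  have hNne : N.Nonempty := by
    apply Finset.image_nonempty.mpr
    rw [← Finset.card_pos]
    omega
  obtain ⟨b0, hb0⟩ := hNne
  obtain ⟨X0, Y0, ht0, ha0, hb0'⟩ := hcrit (a, b0) (hNmem b0 hb0)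
  -- fold tight pairs over subsets of N
  have fold : ∀ s : Finset (Fin n), s ⊆ N → ∃ X Y, Tight r E X Y ∧ a ∈ X ∧ s ⊆ Y := by
    intro s
    induction s using Finset.induction with
    | empty => exact fun _ => ⟨X0, Y0, ht0, ha0, Finset.empty_subset _⟩
    | @insert b s hbs ih =>
      intro hsub
      obtain ⟨X, Y, hT, haX, hsY⟩ := ih (fun x hx => hsub (Finset.mem_insert_of_mem hx))
      obtain ⟨X', Y', hT', haX', hbY'⟩ :=
        hcrit (a, b) (hNmem b (hsub (Finset.mem_insert_self b s)))
      refine ⟨X ∩ X', Y ∪ Y', (tight_combine hGR hT hT').1, Finset.mem_inter.mpr ⟨haX, haX'⟩, ?_⟩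
      intro x hx
      rcases Finset.mem_insert.mp hx with rfl | hx
      · exact Finset.mem_union_right _ hbY'
      · exact Finset.mem_union_left _ (hsY hx)
  obtain ⟨X, Y, hT, haX, hNY⟩ := fold N (le_refl _)
  -- counting contradiction
  have hsub1 : E.filter (fun f => f.1 = a) ⊆ E ∩ X ×ˢ Y := by
    intro f hf
    obtain ⟨hfE, hf1⟩ := Finset.mem_filter.mp hf
    refine Finset.mem_inter.mpr ⟨hfE, Finset.mem_product.mpr ⟨hf1 ▸ haX, ?_⟩⟩
    exact hNY (Finset.mem_image.mpr ⟨f, hf, rfl⟩)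
  have hsub2 : (E ∩ (X.erase a) ×ˢ Y) ∪ E.filter (fun f => f.1 = a) ⊆ E ∩ X ×ˢ Y := by
    apply Finset.union_subset _ hsub1
    exact Finset.inter_subset_inter (Finset.Subset.refl _)
      (Finset.product_subset_product_left (Finset.erase_subset _ _))
  have hdisj : Disjoint (E ∩ (X.erase a) ×ˢ Y) (E.filter (fun f => f.1 = a)) := by
    rw [Finset.disjoint_left]
    intro f hf hf'
    have h1 := (Finset.mem_product.mp (Finset.mem_inter.mp hf).2).1
    have h2 := (Finset.mem_filter.mp hf').2
    exact (Finset.mem_erase.mp h1).1 h2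
  have hcard : cnt E (X.erase a) Y + (E.filter (fun f => f.1 = a)).card ≤ cnt E X Y := by
    rw [cnt, ← Finset.card_union_of_disjoint hdisj]
    exact Finset.card_le_card hsub2
  have hGR' := hGR (X.erase a) Y
  have hXa : 1 ≤ X.card := Finset.card_pos.mpr ⟨a, haX⟩
  rw [Finset.card_erase_of_mem haX] at hGR'
  unfold Tight at hT
  have hc : ((X.card : ℤ) - 1 + Y.card - n) = (X.card + Y.card - n) - 1 := by ring
  -- combine: r * (x + y - n) ≥ r * (x - 1 + y - n) + (r+1)
  have : (r : ℤ) * ((X.card : ℤ) + Y.card - n) ≥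
      (r : ℤ) * ((X.card : ℤ) + Y.card - n - 1) + (r + 1) := by
    have e1 : ((X.card - 1 : ℕ) : ℤ) = (X.card : ℤ) - 1 := by
      push_cast [hXa]; omega
    calc (r : ℤ) * ((X.card : ℤ) + Y.card - n) = cnt E X Y := hT.symm
      _ ≥ cnt E (X.erase a) Y + ((E.filter (fun f => f.1 = a)).card : ℤ) := by exact_mod_cast hcard
      _ ≥ (r : ℤ) * ((X.card : ℤ) + Y.card - n - 1) + (r + 1) := by
          have h2 : ((E.filter (fun f => f.1 = a)).card : ℤ) ≥ (r : ℤ) + 1 := by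
            exact_mod_cast hgt
          rw [e1, hc] at hGR'
          linarith
  linarith [this]

lemma degB_le {r : ℕ} {E : Finset (Fin n × Fin n)} (hGR : GR r E)
    (hcrit : ∀ f ∈ E, ∃ X Y, Tight r E X Y ∧ f.1 ∈ X ∧ f.2 ∈ Y) (b : Fin n) :
    (E.filter (fun f => f.2 = b)).card ≤ r := by
  classical
  by_contra hgt
  push_neg at hgt
  set N : Finset (Fin n) := (E.filter (fun f => f.2 = b)).image Prod.fst with hN
  have hNmem : ∀ a ∈ N, (a, b) ∈ E := by
    intro a ha
    obtain ⟨f, hf, hf1⟩ := Finset.mem_image.mp ha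
    obtain ⟨hfE, hf2⟩ := Finset.mem_filter.mp hf
    have : f = (a, b) := Prod.ext hf1 hf2
    exact this ▸ hfE
  have hNne : N.Nonempty := by
    apply Finset.image_nonempty.mpr
    rw [← Finset.card_pos]
    omega
  obtain ⟨a0, ha0⟩ := hNne
  obtain ⟨X0, Y0, ht0, ha0', hb0'⟩ := hcrit (a0, b) (hNmem a0 ha0)
  have fold : ∀ s : Finset (Fin n), s ⊆ N → ∃ X Y, Tight r E X Y ∧ b ∈ Y ∧ s ⊆ X := by
    intro s
    induction s using Finset.induction with
    | empty => exact fun _ => ⟨X0, Y0, ht0, hb0', Finset.empty_subset _⟩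
    | @insert a s has ih =>
      intro hsub
      obtain ⟨X, Y, hT, hbY, hsX⟩ := ih (fun x hx => hsub (Finset.mem_insert_of_mem hx))
      obtain ⟨X', Y', hT', haX', hbY'⟩ :=
        hcrit (a, b) (hNmem a (hsub (Finset.mem_insert_self a s)))
      refine ⟨X ∪ X', Y ∩ Y', (tight_combine hGR hT hT').2, Finset.mem_inter.mpr ⟨hbY, hbY'⟩, ?_⟩
      intro x hx
      rcases Finset.mem_insert.mp hx with rfl | hx
      · exact Finset.mem_union_right _ haX'
      · exact Finset.mem_union_left _ (hsX hx)
  obtain ⟨X, Y, hT, hbY, hNX⟩ := fold N (le_refl _)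
  have hsub1 : E.filter (fun f => f.2 = b) ⊆ E ∩ X ×ˢ Y := by
    intro f hf
    obtain ⟨hfE, hf2⟩ := Finset.mem_filter.mp hf
    refine Finset.mem_inter.mpr ⟨hfE, Finset.mem_product.mpr ⟨?_, hf2 ▸ hbY⟩⟩
    exact hNX (Finset.mem_image.mpr ⟨f, hf, rfl⟩)
  have hsub2 : (E ∩ X ×ˢ (Y.erase b)) ∪ E.filter (fun f => f.2 = b) ⊆ E ∩ X ×ˢ Y := by
    apply Finset.union_subset _ hsub1
    exact Finset.inter_subset_inter (Finset.Subset.refl _)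
      (Finset.product_subset_product_right (Finset.erase_subset _ _))
  have hdisj : Disjoint (E ∩ X ×ˢ (Y.erase b)) (E.filter (fun f => f.2 = b)) := by
    rw [Finset.disjoint_left]
    intro f hf hf'
    have h1 := (Finset.mem_product.mp (Finset.mem_inter.mp hf).2).2
    have h2 := (Finset.mem_filter.mp hf').2
    exact (Finset.mem_erase.mp h1).1 h2
  have hcard : cnt E X (Y.erase b) + (E.filter (fun f => f.2 = b)).card ≤ cnt E X Y := by
    rw [cnt, ← Finset.card_union_of_disjoint hdisj]
    exact Finset.card_le_card hsub2
  have hGR' := hGR X (Y.erase b)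
  have hYb : 1 ≤ Y.card := Finset.card_pos.mpr ⟨b, hbY⟩
  unfold Tight at hT
  have : (r : ℤ) * ((X.card : ℤ) + Y.card - n) ≥
      (r : ℤ) * ((X.card : ℤ) + Y.card - n - 1) + (r + 1) := by
    have e1 : (((Y.erase b).card : ℕ) : ℤ) = (Y.card : ℤ) - 1 := by
      rw [Finset.card_erase_of_mem hbY]; push_cast [hYb]; omega
    calc (r : ℤ) * ((X.card : ℤ) + Y.card - n) = cnt E X Y := hT.symm
      _ ≥ cnt E X (Y.erase b) + ((E.filter (fun f => f.2 = b)).card : ℤ) := by exact_mod_cast hcard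
      _ ≥ (r : ℤ) * ((X.card : ℤ) + Y.card - n - 1) + (r + 1) := by
          have h2 : ((E.filter (fun f => f.2 = b)).card : ℤ) ≥ (r : ℤ) + 1 := by
            exact_mod_cast hgt
          rw [e1] at hGR'
          have hc : ((X.card : ℤ) + ((Y.card : ℤ) - 1) - n) = (X.card + Y.card - n) - 1 := by ring
          rw [hc] at hGR'
          linarith
  linarith [this]

theorem exists_regular (r : ℕ) (E : Finset (Fin n × Fin n)) :
    GR r E → ∃ F, F ⊆ E ∧ (∀ a, (F.filter (fun f => f.1 = a)).card = r) ∧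
      (∀ b, (F.filter (fun f => f.2 = b)).card = r) := by
  induction E using Finset.strongInduction with
  | _ E ih =>
  intro h
  by_cases hc : ∃ f ∈ E, GR r (E.erase f)
  · obtain ⟨f, hf, hGR⟩ := hc
    obtain ⟨F, hFE, h1, h2⟩ := ih (E.erase f) (Finset.erase_ssubset hf) hGR
    exact ⟨F, hFE.trans (Finset.erase_subset f E), h1, h2⟩
  · push_neg at hc
    have hcrit : ∀ f ∈ E, ∃ X Y, Tight r E X Y ∧ f.1 ∈ X ∧ f.2 ∈ Y :=
      fun f hf => crit_tight h hf (hc f hf)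
    exact ⟨E, le_refl _,
      fun a => le_antisymm (degA_le h hcrit a) (degA_ge h a),
      fun b => le_antisymm (degB_le h hcrit b) (degB_ge h b)⟩

end SB15

namespace SB15
variable {n : ℕ}

theorem regular_decomp (r : ℕ) :
    ∀ F : Finset (Fin n × Fin n),
    (∀ a, (F.filter (fun f => f.1 = a)).card = r) →
    (∀ b, (F.filter (fun f => f.2 = b)).card = r) →
    ∃ M : Fin r → Finset (Fin n × Fin n),
      (∀ i, M i ⊆ F ∧ (∀ a, ((M i).filter (fun e => e.1 = a)).card = 1) ∧
        (∀ b, ((M i).filter (fun e => e.2 = b)).card = 1)) ∧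
      (∀ i j, i ≠ j → Disjoint (M i) (M j)) := by
  classical
  induction r with
  | zero => exact fun F _ _ => ⟨fun i => i.elim0, fun i => i.elim0, fun i => i.elim0⟩
  | succ r ih =>
    intro F hA hB
    set t : Fin n → Finset (Fin n) := fun a => (F.filter (fun f => f.1 = a)).image Prod.snd
      with ht
    have hall : ∀ s : Finset (Fin n), s.card ≤ (s.biUnion t).card := by
      intro s
      set T := s.biUnion t with hT
      have hsub : F.filter (fun f => f.1 ∈ s) ⊆ F.filter (fun f => f.2 ∈ T) := by
        intro f hf
        obtain ⟨hfF, hfs⟩ := Finset.mem_filter.mp hf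
        refine Finset.mem_filter.mpr ⟨hfF, ?_⟩
        refine Finset.mem_biUnion.mpr ⟨f.1, hfs, ?_⟩
        exact Finset.mem_image.mpr ⟨f, Finset.mem_filter.mpr ⟨hfF, rfl⟩, rfl⟩
      have h1 : (F.filter (fun f => f.1 ∈ s)).card = ∑ a ∈ s, (r+1) := by
        rw [Finset.card_eq_sum_card_fiberwise
          (f := Prod.fst) (s := F.filter (fun f => f.1 ∈ s)) (t := s) (fun x hx => (Finset.mem_filter.mp hx).2)]
        refine Finset.sum_congr rfl fun a ha => ?_
        rw [← hA a]
        congr 1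
        ext f
        simp only [Finset.mem_filter]
        constructor
        · rintro ⟨⟨h1, -⟩, h2⟩; exact ⟨h1, h2⟩
        · rintro ⟨h1, h2⟩; exact ⟨⟨h1, h2 ▸ ha⟩, h2⟩
      have h2 : (F.filter (fun f => f.2 ∈ T)).card = ∑ b ∈ T, (r+1) := by
        rw [Finset.card_eq_sum_card_fiberwise
          (f := Prod.snd) (s := F.filter (fun f => f.2 ∈ T)) (t := T) (fun x hx => (Finset.mem_filter.mp hx).2)]
        refine Finset.sum_congr rfl fun b hb => ?_
        rw [← hB b]
        congr 1
        ext f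
        simp only [Finset.mem_filter]
        constructor
        · rintro ⟨⟨h1, -⟩, h2⟩; exact ⟨h1, h2⟩
        · rintro ⟨h1, h2⟩; exact ⟨⟨h1, h2 ▸ hb⟩, h2⟩
      have := Finset.card_le_card hsub
      rw [h1, h2, Finset.sum_const, Finset.sum_const, smul_eq_mul, smul_eq_mul] at this
      exact Nat.le_of_mul_le_mul_right (by linarith) (Nat.succ_pos r)
    obtain ⟨g, hginj, hgmem⟩ := (Finset.all_card_le_biUnion_card_iff_exists_injective t).mp hall
    have hgF : ∀ a, (a, g a) ∈ F := by
      intro a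
      obtain ⟨f, hf, hf2⟩ := Finset.mem_image.mp (hgmem a)
      obtain ⟨hfF, hf1⟩ := Finset.mem_filter.mp hf
      have : f = (a, g a) := Prod.ext hf1 hf2
      exact this ▸ hfF
    have hgsurj : Function.Surjective g := Finite.surjective_of_injective hginj
    set M0 : Finset (Fin n × Fin n) := Finset.univ.image (fun a => (a, g a)) with hM0
    have hM0mem : ∀ x : Fin n × Fin n, x ∈ M0 ↔ x.2 = g x.1 := by
      intro x
      simp only [hM0, Finset.mem_image, Finset.mem_univ, true_and]
      constructor
      · rintro ⟨a, rfl⟩; rfl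
      · intro h; exact ⟨x.1, by rw [← h]⟩
    have hM0F : M0 ⊆ F := fun x hx => by
      have := (hM0mem x).mp hx
      have hx1 : x = (x.1, g x.1) := Prod.ext rfl this
      rw [hx1]; exact hgF x.1
    have hM0a : ∀ a, (M0.filter (fun e => e.1 = a)).card = 1 := by
      intro a
      have : M0.filter (fun e => e.1 = a) = {(a, g a)} := by
        ext x
        simp only [Finset.mem_filter, Finset.mem_singleton, hM0mem x]
        constructor
        · rintro ⟨h2, h1⟩; exact Prod.ext h1 (by rw [h2, h1])
        · rintro rfl; exact ⟨rfl, rfl⟩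
      rw [this, Finset.card_singleton]
    have hM0b : ∀ b, (M0.filter (fun e => e.2 = b)).card = 1 := by
      intro b
      obtain ⟨a0, rfl⟩ := hgsurj b
      have : M0.filter (fun e => e.2 = g a0) = {(a0, g a0)} := by
        ext x
        simp only [Finset.mem_filter, Finset.mem_singleton, hM0mem x]
        constructor
        · rintro ⟨h2, h1⟩
          have : x.1 = a0 := hginj (h2 ▸ h1)
          exact Prod.ext this (by rw [h2, this])
        · rintro rfl; exact ⟨rfl, rfl⟩
      rw [this, Finset.card_singleton]
    set F' := F \ M0 with hF'
    have hA' : ∀ a, (F'.filter (fun f => f.1 = a)).card = r := by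
      intro a
      have he : F'.filter (fun f => f.1 = a) = (F.filter (fun f => f.1 = a)).erase (a, g a) := by
        ext x
        simp only [hF', Finset.mem_filter, Finset.mem_erase, Finset.mem_sdiff, hM0mem x]
        constructor
        · rintro ⟨⟨hxF, hxM⟩, h1⟩
          exact ⟨fun he => hxM (by rw [he]), hxF, h1⟩
        · rintro ⟨hne, hxF, h1⟩
          refine ⟨⟨hxF, fun h2 => hne (Prod.ext h1 (by rw [h2, h1]))⟩, h1⟩
      rw [he, Finset.card_erase_of_mem
        (show (a, g a) ∈ F.filter (fun f => f.1 = a) from Finset.mem_filter.mpr ⟨hgF a, rfl⟩),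
        hA a]
      omega
    have hB' : ∀ b, (F'.filter (fun f => f.2 = b)).card = r := by
      intro b
      obtain ⟨a0, rfl⟩ := hgsurj b
      have he : F'.filter (fun f => f.2 = g a0)
          = (F.filter (fun f => f.2 = g a0)).erase (a0, g a0) := by
        ext x
        simp only [hF', Finset.mem_filter, Finset.mem_erase, Finset.mem_sdiff, hM0mem x]
        constructor
        · rintro ⟨⟨hxF, hxM⟩, h2⟩
          exact ⟨fun he => hxM (by rw [he]), hxF, h2⟩
        · rintro ⟨hne, hxF, h2⟩
          refine ⟨⟨hxF, fun h1 => hne ?_⟩, h2⟩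
          have : x.1 = a0 := hginj (h1 ▸ h2)
          exact Prod.ext this (by rw [h1, this])
      rw [he, Finset.card_erase_of_mem
        (show (a0, g a0) ∈ F.filter (fun f => f.2 = g a0) from
          Finset.mem_filter.mpr ⟨hgF a0, rfl⟩), hB (g a0)]
      omega
    obtain ⟨M', hM'1, hM'2⟩ := ih F' hA' hB'
    have hd0 : ∀ i, Disjoint M0 (M' i) := by
      intro i
      refine Finset.disjoint_left.mpr fun x hx hx' => ?_
      have := (hM'1 i).1 hx'
      rw [hF', Finset.mem_sdiff] at this
      exact this.2 hx
    refine ⟨Fin.cons M0 M', ?_, ?_⟩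
    · intro i
      refine Fin.cases ?_ ?_ i
      · rw [Fin.cons_zero]; exact ⟨hM0F, hM0a, hM0b⟩
      · intro j
        rw [Fin.cons_succ]
        refine ⟨((hM'1 j).1).trans ?_, (hM'1 j).2.1, (hM'1 j).2.2⟩
        rw [hF']; exact Finset.sdiff_subset
    · intro i j
      refine Fin.cases ?_ ?_ i <;> [skip; intro i'] <;> refine Fin.cases ?_ ?_ j
      · intro h; exact absurd rfl h
      · intro j' _
        rw [Fin.cons_zero, Fin.cons_succ]; exact hd0 j'
      · intro _
        rw [Fin.cons_zero, Fin.cons_succ]; exact (hd0 i').symm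
      · intro j' hne
        rw [Fin.cons_succ, Fin.cons_succ]
        exact hM'2 i' j' (fun h => hne (by rw [h]))

end SB15

namespace SB15
variable {n : ℕ}

lemma card_univ_edges : (Finset.univ : Finset (Fin n × Fin n)).card = n * n := by
  simp [Finset.card_univ]

lemma sum_w_mul_pow (q c : ℝ) (S : Finset (Fin n × Fin n)) :
    ∑ E ∈ (Finset.univ : Finset (Fin n × Fin n)).powerset,
      q ^ E.card * (1 - q) ^ (n * n - E.card) * c ^ (E ∩ S).card
    = (q * c + (1 - q)) ^ S.card := by
  classical
  have key := Finset.prod_add (fun i : Fin n × Fin n => q * (if i ∈ S then c else 1))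
    (fun _ => 1 - q) Finset.univ
  have lhs : ∏ i ∈ (Finset.univ : Finset (Fin n × Fin n)),
      (q * (if i ∈ S then c else 1) + (1 - q)) = (q * c + (1 - q)) ^ S.card := by
    have : ∀ i ∈ (Finset.univ : Finset (Fin n × Fin n)),
        q * (if i ∈ S then c else 1) + (1 - q)
          = (if i ∈ S then (q * c + (1 - q)) else 1) := by
      intro i _
      split <;> ring
    rw [Finset.prod_congr rfl this, Finset.prod_ite_mem, Finset.univ_inter,
      Finset.prod_const]
  have rhs : ∀ E ∈ (Finset.univ : Finset (Fin n × Fin n)).powerset,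
      (∏ i ∈ E, q * (if i ∈ S then c else 1)) * ∏ _i ∈ Finset.univ \ E, (1 - q)
        = q ^ E.card * (1 - q) ^ (n * n - E.card) * c ^ (E ∩ S).card := by
    intro E hE
    rw [Finset.prod_mul_distrib, Finset.prod_const, Finset.prod_ite_mem, Finset.prod_const,
      Finset.prod_const, Finset.card_sdiff_of_subset (Finset.mem_powerset.mp hE), card_univ_edges]
    ring
  rw [← Finset.sum_congr rfl rhs, ← key, lhs]

lemma sum_w_one (q : ℝ) :
    ∑ E ∈ (Finset.univ : Finset (Fin n × Fin n)).powerset,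
      q ^ E.card * (1 - q) ^ (n * n - E.card) = 1 := by
  have := sum_w_mul_pow (n := n) q 1 ∅
  simp only [Finset.inter_empty, Finset.card_empty, pow_zero, mul_one] at this
  rw [this]

lemma exp_neg_le {x : ℝ} (hx : 0 ≤ x) : Real.exp (-x) ≤ 1 - x + x ^ 2 := by
  have h1 : x + 1 ≤ Real.exp x := Real.add_one_le_exp x
  have h2 : (0:ℝ) < Real.exp x := Real.exp_pos x
  have hmul : Real.exp (-x) * Real.exp x = 1 := by
    rw [← Real.exp_add]; simp
  have hpos : (0:ℝ) < 1 - x + x ^ 2 := by nlinarith [sq_nonneg (x - 1/2)]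
  nlinarith [Real.exp_pos (-x), mul_pos hpos h2]

lemma chernoff {q δ : ℝ} (hq0 : 0 < q) (hq1 : q ≤ 1) (hδ0 : 0 < δ) (hδ1 : δ ≤ 1)
    (S : Finset (Fin n × Fin n)) :
    ∑ E ∈ (Finset.univ : Finset (Fin n × Fin n)).powerset,
      q ^ E.card * (1 - q) ^ (n * n - E.card) *
        (if ((E ∩ S).card : ℝ) < (1 - δ) * S.card * q then (1:ℝ) else 0)
    ≤ Real.exp (-(S.card * q * δ ^ 2 / 4)) := by
  classical
  set l : ℝ := δ / 2 with hl
  have hl0 : 0 < l := by positivity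
  have hl1 : l ≤ 1 := by rw [hl]; linarith
  set c : ℝ := Real.exp (-l) with hc
  have hc0 : 0 < c := Real.exp_pos _
  set A : ℝ := Real.exp (l * ((1 - δ) * S.card * q)) with hA
  have hstep : ∀ E ∈ (Finset.univ : Finset (Fin n × Fin n)).powerset,
      q ^ E.card * (1 - q) ^ (n * n - E.card) *
        (if ((E ∩ S).card : ℝ) < (1 - δ) * S.card * q then (1:ℝ) else 0)
      ≤ q ^ E.card * (1 - q) ^ (n * n - E.card) * (A * c ^ (E ∩ S).card) := by
    intro E _
    have hw : (0:ℝ) ≤ q ^ E.card * (1 - q) ^ (n * n - E.card) :=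
      mul_nonneg (pow_nonneg hq0.le _) (pow_nonneg (by linarith) _)
    refine mul_le_mul_of_nonneg_left ?_ hw
    split
    · rename_i hlt
      have h0 : (0:ℝ) ≤ (1 - δ) * S.card * q - (E ∩ S).card := by linarith
      have : (1:ℝ) ≤ Real.exp (l * ((1 - δ) * S.card * q - (E ∩ S).card)) := by
        calc (1:ℝ) = Real.exp 0 := Real.exp_zero.symm
          _ ≤ _ := Real.exp_le_exp.mpr (mul_nonneg hl0.le h0)
      calc (1:ℝ) ≤ Real.exp (l * ((1 - δ) * S.card * q - (E ∩ S).card)) := this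
        _ = A * c ^ (E ∩ S).card := by
            rw [hA, hc, ← Real.exp_nat_mul, ← Real.exp_add]
            congr 1
            ring
    · positivity
  calc ∑ E ∈ (Finset.univ : Finset (Fin n × Fin n)).powerset,
        q ^ E.card * (1 - q) ^ (n * n - E.card) *
          (if ((E ∩ S).card : ℝ) < (1 - δ) * S.card * q then (1:ℝ) else 0)
      ≤ ∑ E ∈ (Finset.univ : Finset (Fin n × Fin n)).powerset,
        q ^ E.card * (1 - q) ^ (n * n - E.card) * (A * c ^ (E ∩ S).card) :=
        Finset.sum_le_sum hstep
    _ = A * ∑ E ∈ (Finset.univ : Finset (Fin n × Fin n)).powerset,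
        q ^ E.card * (1 - q) ^ (n * n - E.card) * c ^ (E ∩ S).card := by
        rw [Finset.mul_sum]
        refine Finset.sum_congr rfl fun E _ => by ring
    _ = A * (q * c + (1 - q)) ^ S.card := by rw [sum_w_mul_pow]
    _ ≤ A * (Real.exp (-(q * l * (1 - l)))) ^ S.card := by
        apply mul_le_mul_of_nonneg_left _ (le_of_lt (Real.exp_pos _))
        apply pow_le_pow_left₀
        · exact add_nonneg (mul_nonneg hq0.le hc0.le) (by linarith)
        · have h1 : c ≤ 1 - l + l ^ 2 := exp_neg_le (le_of_lt hl0)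
          have h2 : q * c + (1 - q) ≤ 1 - q * l * (1 - l) := by nlinarith
          have h3 : 1 - q * l * (1 - l) ≤ Real.exp (-(q * l * (1 - l))) := by
            have := Real.add_one_le_exp (-(q * l * (1 - l)))
            linarith
          linarith
    _ = Real.exp (l * ((1 - δ) * S.card * q) + S.card * (-(q * l * (1 - l)))) := by
        rw [hA, ← Real.exp_nat_mul, ← Real.exp_add]
    _ = Real.exp (-(S.card * q * δ ^ 2 / 4)) := by
        congr 1
        rw [hl]
        ring

end SB15

namespace SB15
variable {n : ℕ}

lemma choose_le_pow (n k : ℕ) : n.choose k ≤ n ^ k :=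
  calc n.choose k ≤ k.factorial * n.choose k := Nat.le_mul_of_pos_left _ k.factorial_pos
    _ = n.descFactorial k := (Nat.descFactorial_eq_factorial_mul_choose n k).symm
    _ ≤ n ^ k := Nat.descFactorial_le_pow n k

lemma choose_le_pow_min (n k : ℕ) (hk : k ≤ n) : n.choose k ≤ n ^ (min k (n - k)) := by
  rcases le_total k (n - k) with h | h
  · rw [min_eq_left h]; exact choose_le_pow n k
  · rw [min_eq_right h, ← Nat.choose_symm hk]; exact choose_le_pow n (n - k)

set_option maxHeartbeats 1000000 in
lemma counting {q δ : ℝ} (hq0 : 0 ≤ q) (hδ0 : 0 < δ) (hn : 2 ≤ n)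
    (hlog : 48 * Real.log n ≤ (n : ℝ) * q * δ ^ 2) :
    ∑ P ∈ ((Finset.univ : Finset (Fin n)).powerset ×ˢ
        (Finset.univ : Finset (Fin n)).powerset).filter
        (fun P => n + 1 ≤ P.1.card + P.2.card),
      Real.exp (-((P.1.card : ℝ) * P.2.card * q * δ ^ 2 / 4)) ≤ 4 / (n : ℝ) ^ 2 := by
  classical
  have hn0 : (0:ℝ) < n := by positivity
  have hn1 : (1:ℝ) ≤ n := by exact_mod_cast hn.trans' (by norm_num)
  have hlogn : (0:ℝ) ≤ Real.log n := Real.log_nonneg hn1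
  set Pairs := ((Finset.univ : Finset (Fin n)).powerset ×ˢ
      (Finset.univ : Finset (Fin n)).powerset).filter
      (fun P => n + 1 ≤ P.1.card + P.2.card) with hPairs
  have hmemP : ∀ P ∈ Pairs, P.1.card ≤ n ∧ P.2.card ≤ n ∧ n + 1 ≤ P.1.card + P.2.card := by
    intro P hP
    obtain ⟨hP1, hP2⟩ := Finset.mem_filter.mp hP
    refine ⟨?_, ?_, hP2⟩
    · simpa using Finset.card_le_card
        (Finset.mem_powerset.mp (Finset.mem_product.mp hP1).1)
    · simpa using Finset.card_le_card
        (Finset.mem_powerset.mp (Finset.mem_product.mp hP1).2)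
  have hterm : ∀ P ∈ Pairs,
      Real.exp (-((P.1.card : ℝ) * P.2.card * q * δ ^ 2 / 4))
        ≤ ((n : ℝ) ^ (2 * min P.1.card P.2.card + 4))⁻¹ := by
    intro P hP
    obtain ⟨hx, hy, hxy⟩ := hmemP P hP
    set x := P.1.card
    set y := P.2.card
    set u := min x y with hu
    have hu1 : 1 ≤ u := by omega
    have hun : u * n ≤ 2 * (x * y) := by
      rcases le_total x y with h | h
      · rw [hu, min_eq_left h]
        calc x * n ≤ x * (2 * y) := Nat.mul_le_mul_left x (by omega)
          _ = 2 * (x * y) := by ring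
      · rw [hu, min_eq_right h]
        calc y * n ≤ y * (2 * x) := Nat.mul_le_mul_left y (by omega)
          _ = 2 * (x * y) := by ring
    have hun' : (u : ℝ) * n ≤ 2 * ((x : ℝ) * y) := by exact_mod_cast hun
    have hkey : ((2 * u + 4 : ℕ) : ℝ) * Real.log n ≤ (x : ℝ) * y * q * δ ^ 2 / 4 := by
      have hu1' : (1:ℝ) ≤ (u : ℝ) := by exact_mod_cast hu1
      have s1 : ((2 * u + 4 : ℕ) : ℝ) * Real.log n ≤ 6 * (u : ℝ) * Real.log n := by
        apply mul_le_mul_of_nonneg_right _ hlogn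
        push_cast
        linarith
      have s2 : 6 * (u : ℝ) * Real.log n ≤ (u : ℝ) * ((n : ℝ) * q * δ ^ 2) / 8 := by
        have := mul_le_mul_of_nonneg_left hlog (le_of_lt (lt_of_lt_of_le zero_lt_one hu1'))
        calc 6 * (u : ℝ) * Real.log n ≤ (u : ℝ) * (48 * Real.log n) / 8 := by linarith
          _ ≤ (u : ℝ) * ((n : ℝ) * q * δ ^ 2) / 8 := by linarith
      have s3 : (u : ℝ) * ((n : ℝ) * q * δ ^ 2) / 8 ≤ (x : ℝ) * y * q * δ ^ 2 / 4 := by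
        have hqδ : (0:ℝ) ≤ q * δ ^ 2 := mul_nonneg hq0 (sq_nonneg δ)
        have := mul_le_mul_of_nonneg_right hun' hqδ
        nlinarith
      linarith
    calc Real.exp (-((x : ℝ) * y * q * δ ^ 2 / 4))
        ≤ Real.exp (-(((2 * u + 4 : ℕ) : ℝ) * Real.log n)) := by
          apply Real.exp_le_exp.mpr; linarith
      _ = ((n : ℝ) ^ (2 * u + 4))⁻¹ := by
          rw [← Real.log_pow, Real.exp_neg, Real.exp_log (by positivity)]
  have hmaps : ∀ P ∈ Pairs, (P.1.card, P.2.card) ∈ Finset.range (n+1) ×ˢ Finset.range (n+1) := by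
    intro P hP
    obtain ⟨hx, hy, -⟩ := hmemP P hP
    refine Finset.mem_product.mpr ⟨?_, ?_⟩ <;> simp only [Finset.mem_range] <;> omega
  have hfibbound : ∀ v ∈ Finset.range (n+1) ×ˢ Finset.range (n+1),
      ∑ P ∈ Pairs.filter (fun P => (P.1.card, P.2.card) = v),
        ((n : ℝ) ^ (2 * min P.1.card P.2.card + 4))⁻¹ ≤ ((n : ℝ) ^ 4)⁻¹ := by
    intro v _
    rcases Finset.eq_empty_or_nonempty (Pairs.filter (fun P => (P.1.card, P.2.card) = v)) with
      he | ⟨P0, hP0⟩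
    · rw [he, Finset.sum_empty]
      positivity
    · have hP0' := Finset.mem_filter.mp hP0
      obtain ⟨hx0, hy0, hxy0⟩ := hmemP P0 hP0'.1
      have hv1 : v.1 = P0.1.card := by rw [← hP0'.2]
      have hv2 : v.2 = P0.2.card := by rw [← hP0'.2]
      have hv1n : v.1 ≤ n := by omega
      have hv2n : v.2 ≤ n := by omega
      have hv12 : n + 1 ≤ v.1 + v.2 := by omega
      have hconst : ∑ P ∈ Pairs.filter (fun P => (P.1.card, P.2.card) = v),
          ((n : ℝ) ^ (2 * min P.1.card P.2.card + 4))⁻¹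
          = ((Pairs.filter (fun P => (P.1.card, P.2.card) = v)).card : ℝ) *
            ((n : ℝ) ^ (2 * min v.1 v.2 + 4))⁻¹ := by
        rw [← nsmul_eq_mul, ← Finset.sum_const]
        apply Finset.sum_congr rfl
        intro P hP
        have h := (Finset.mem_filter.mp hP).2
        have e1 : P.1.card = v.1 := by rw [← h]
        have e2 : P.2.card = v.2 := by rw [← h]
        rw [e1, e2]
      rw [hconst]
      have hfib : (Pairs.filter (fun P => (P.1.card, P.2.card) = v)).card
          ≤ n.choose v.1 * n.choose v.2 := by
        have hsub : Pairs.filter (fun P => (P.1.card, P.2.card) = v)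
            ⊆ Finset.powersetCard v.1 (Finset.univ : Finset (Fin n)) ×ˢ
              Finset.powersetCard v.2 (Finset.univ : Finset (Fin n)) := by
          intro P hP'
          have h := (Finset.mem_filter.mp hP').2
          have e1 : P.1.card = v.1 := by rw [← h]
          have e2 : P.2.card = v.2 := by rw [← h]
          refine Finset.mem_product.mpr ⟨?_, ?_⟩
          · exact Finset.mem_powersetCard.mpr ⟨Finset.subset_univ _, e1⟩
          · exact Finset.mem_powersetCard.mpr ⟨Finset.subset_univ _, e2⟩
        calc (Pairs.filter (fun P => (P.1.card, P.2.card) = v)).card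
            ≤ _ := Finset.card_le_card hsub
          _ = n.choose v.1 * n.choose v.2 := by
              rw [Finset.card_product, Finset.card_powersetCard, Finset.card_powersetCard,
                Finset.card_univ, Fintype.card_fin]
      have hchoose : n.choose v.1 * n.choose v.2 ≤ n ^ (2 * min v.1 v.2) := by
        calc n.choose v.1 * n.choose v.2
            ≤ n ^ (min v.1 (n - v.1)) * n ^ (min v.2 (n - v.2)) :=
              Nat.mul_le_mul (choose_le_pow_min n v.1 hv1n) (choose_le_pow_min n v.2 hv2n)
          _ = n ^ (min v.1 (n - v.1) + min v.2 (n - v.2)) := (pow_add n _ _).symm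
          _ ≤ n ^ (2 * min v.1 v.2) := Nat.pow_le_pow_right (by omega) (by omega)
      have h1 : ((Pairs.filter (fun P => (P.1.card, P.2.card) = v)).card : ℝ)
          ≤ ((n : ℝ) ^ (2 * min v.1 v.2)) := by
        exact_mod_cast hfib.trans hchoose
      have h2 : (0:ℝ) < ((n : ℝ) ^ (2 * min v.1 v.2 + 4))⁻¹ := by positivity
      calc ((Pairs.filter (fun P => (P.1.card, P.2.card) = v)).card : ℝ) *
            ((n : ℝ) ^ (2 * min v.1 v.2 + 4))⁻¹
          ≤ ((n : ℝ) ^ (2 * min v.1 v.2)) * ((n : ℝ) ^ (2 * min v.1 v.2 + 4))⁻¹ :=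
            mul_le_mul_of_nonneg_right h1 h2.le
        _ = ((n : ℝ) ^ 4)⁻¹ := by
            rw [pow_add]
            field_simp
  calc ∑ P ∈ Pairs, Real.exp (-((P.1.card : ℝ) * P.2.card * q * δ ^ 2 / 4))
      ≤ ∑ P ∈ Pairs, ((n : ℝ) ^ (2 * min P.1.card P.2.card + 4))⁻¹ :=
        Finset.sum_le_sum hterm
    _ = ∑ v ∈ Finset.range (n+1) ×ˢ Finset.range (n+1),
        ∑ P ∈ Pairs.filter (fun P => (P.1.card, P.2.card) = v),
          ((n : ℝ) ^ (2 * min P.1.card P.2.card + 4))⁻¹ :=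
        (Finset.sum_fiberwise_of_maps_to hmaps _).symm
    _ ≤ ∑ _v ∈ Finset.range (n+1) ×ˢ Finset.range (n+1), ((n : ℝ) ^ 4)⁻¹ :=
        Finset.sum_le_sum hfibbound
    _ = ((n + 1 : ℝ) ^ 2) * ((n : ℝ) ^ 4)⁻¹ := by
        rw [Finset.sum_const, nsmul_eq_mul, Finset.card_product, Finset.card_range]
        push_cast
        ring
    _ ≤ 4 / (n : ℝ) ^ 2 := by
        rw [div_eq_mul_inv]
        have hnn : (2:ℝ) ≤ n := by exact_mod_cast hn
        have e1 : ((n:ℝ) ^ 4)⁻¹ = ((n:ℝ)^2)⁻¹ * ((n:ℝ)^2)⁻¹ := by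
          rw [← mul_inv, ← pow_add]
        have h2 : ((n + 1 : ℝ) ^ 2) * ((n:ℝ)^2)⁻¹ ≤ 4 := by
          rw [← div_eq_mul_inv, div_le_iff₀ (by positivity)]
          nlinarith
        calc ((n + 1 : ℝ) ^ 2) * ((n : ℝ) ^ 4)⁻¹
            = (((n + 1 : ℝ) ^ 2) * ((n:ℝ)^2)⁻¹) * ((n:ℝ)^2)⁻¹ := by rw [e1]; ring
          _ ≤ 4 * ((n:ℝ)^2)⁻¹ := mul_le_mul_of_nonneg_right h2 (by positivity)

end SB15

namespace SB15
variable {n : ℕ}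

lemma GR_of_nobad {q ε₀ : ℝ} (hq0 : 0 ≤ q) (hε0 : 0 < ε₀) (hε1 : ε₀ ≤ 1)
    (hnq : 1 ≤ ε₀ / 2 * ((n : ℝ) * q)) (E : Finset (Fin n × Fin n))
    (hE : ∀ X Y : Finset (Fin n), n + 1 ≤ X.card + Y.card →
      (1 - ε₀ / 2) * ((X ×ˢ Y).card : ℝ) * q ≤ ((E ∩ X ×ˢ Y).card : ℝ)) :
    GR ⌈(1 - ε₀) * (n : ℝ) * q⌉₊ E := by
  intro X Y
  set r := ⌈(1 - ε₀) * (n : ℝ) * q⌉₊ with hr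
  by_cases hxy : n + 1 ≤ X.card + Y.card
  · have hcard := hE X Y hxy
    rw [Finset.card_product] at hcard
    have hxn : X.card ≤ n := by
      have := Finset.card_le_univ X
      simpa using this
    have hyn : Y.card ≤ n := by
      have := Finset.card_le_univ Y
      simpa using this
    have hr1 : (r : ℝ) ≤ (1 - ε₀) * (n : ℝ) * q + 1 := by
      apply le_of_lt
      apply Nat.ceil_lt_add_one
      have : (0:ℝ) ≤ 1 - ε₀ := by linarith
      positivity
    have hxn' : (X.card : ℝ) ≤ (n : ℝ) := by exact_mod_cast hxn
    have hyn' : (Y.card : ℝ) ≤ (n : ℝ) := by exact_mod_cast hyn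
    have hxy' : (n : ℝ) + 1 ≤ (X.card : ℝ) + (Y.card : ℝ) := by exact_mod_cast hxy
    push_cast at hcard
    have hnk : (n : ℝ) * ((X.card : ℝ) + (Y.card : ℝ) - n) ≤ (X.card : ℝ) * (Y.card : ℝ) := by
      nlinarith
    have hδ : (0:ℝ) ≤ 1 - ε₀ / 2 := by linarith
    have hk1 : (1:ℝ) ≤ (X.card : ℝ) + (Y.card : ℝ) - n := by linarith
    have hfinal : (r : ℝ) * ((X.card : ℝ) + (Y.card : ℝ) - n) ≤ ((E ∩ X ×ˢ Y).card : ℝ) := by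
      have c1 : (r : ℝ) * ((X.card : ℝ) + (Y.card : ℝ) - n)
          ≤ ((1 - ε₀) * (n : ℝ) * q + 1) * ((X.card : ℝ) + (Y.card : ℝ) - n) :=
        mul_le_mul_of_nonneg_right hr1 (by linarith)
      have h1 : (1 - ε₀) * (n : ℝ) * q + 1 ≤ (1 - ε₀ / 2) * ((n : ℝ) * q) := by
        nlinarith
      have c2 : ((1 - ε₀) * (n : ℝ) * q + 1) * ((X.card : ℝ) + (Y.card : ℝ) - n)
          ≤ (1 - ε₀ / 2) * ((n : ℝ) * q) * ((X.card : ℝ) + (Y.card : ℝ) - n) :=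
        mul_le_mul_of_nonneg_right h1 (by linarith)
      have c3 : (1 - ε₀ / 2) * ((n : ℝ) * q) * ((X.card : ℝ) + (Y.card : ℝ) - n)
          ≤ (1 - ε₀ / 2) * ((X.card : ℝ) * (Y.card : ℝ)) * q := by
        have hq' : (0:ℝ) ≤ q := hq0
        nlinarith [mul_le_mul_of_nonneg_left hnk (mul_nonneg hδ hq')]
      linarith
    unfold cnt
    exact_mod_cast hfinal
  · have hle : X.card + Y.card ≤ n := by omega
    have h1 : (X.card : ℤ) + Y.card - n ≤ 0 := by omega
    calc (r : ℤ) * ((X.card : ℤ) + Y.card - n) ≤ 0 :=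
        mul_nonpos_of_nonneg_of_nonpos (by positivity) h1
      _ ≤ cnt E X Y := by positivity

lemma main_bound (n : ℕ) (ε ε₀ q : ℝ) (hq0 : 0 < q) (hq1 : q ≤ 1)
    (hε0 : 0 < ε₀) (hεhalf : ε₀ ≤ 1 / 2) (hεε : ε₀ ≤ ε) (hn : 2 ≤ n)
    (hnq : 1 ≤ ε₀ / 2 * ((n : ℝ) * q))
    (hlog : 48 * Real.log n ≤ (n : ℝ) * q * (ε₀ / 2) ^ 2) :
    1 - 4 / (n : ℝ) ^ 2 ≤
      ∑ E ∈ (Finset.univ : Finset (Fin n × Fin n)).powerset,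
        q ^ E.card * (1 - q) ^ (n * n - E.card) *
          (if ∃ m : ℕ, (1 - ε) * n * q ≤ (m : ℝ) ∧
              ∃ M : Fin m → Finset (Fin n × Fin n),
                (∀ i, M i ⊆ E ∧
                  (∀ a : Fin n, ((M i).filter (fun e => e.1 = a)).card = 1) ∧
                  (∀ b : Fin n, ((M i).filter (fun e => e.2 = b)).card = 1)) ∧
                (∀ i j, i ≠ j → Disjoint (M i) (M j))
            then (1 : ℝ) else 0) := by
  classical
  set δ : ℝ := ε₀ / 2 with hδdef
  have hδ0 : 0 < δ := by positivity
  have hδ1 : δ ≤ 1 := by rw [hδdef]; linarith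
  set nobad : Finset (Fin n × Fin n) → Prop := fun E =>
    ∀ X Y : Finset (Fin n), n + 1 ≤ X.card + Y.card →
      (1 - δ) * ((X ×ˢ Y).card : ℝ) * q ≤ ((E ∩ X ×ˢ Y).card : ℝ) with hnobad
  have hw : ∀ E : Finset (Fin n × Fin n),
      (0:ℝ) ≤ q ^ E.card * (1 - q) ^ (n * n - E.card) := fun E =>
    mul_nonneg (pow_nonneg hq0.le _) (pow_nonneg (by linarith) _)
  -- nobad implies the event
  have himp : ∀ E : Finset (Fin n × Fin n), nobad E →
      ∃ m : ℕ, (1 - ε) * n * q ≤ (m : ℝ) ∧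
        ∃ M : Fin m → Finset (Fin n × Fin n),
          (∀ i, M i ⊆ E ∧
            (∀ a : Fin n, ((M i).filter (fun e => e.1 = a)).card = 1) ∧
            (∀ b : Fin n, ((M i).filter (fun e => e.2 = b)).card = 1)) ∧
          (∀ i j, i ≠ j → Disjoint (M i) (M j)) := by
    intro E hE
    have hGR : GR ⌈(1 - ε₀) * (n : ℝ) * q⌉₊ E :=
      GR_of_nobad hq0.le hε0 (by linarith) hnq E hE
    set r := ⌈(1 - ε₀) * (n : ℝ) * q⌉₊ with hr
    obtain ⟨F, hFE, hFa, hFb⟩ := exists_regular r E hGR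
    obtain ⟨M, hM1, hM2⟩ := regular_decomp r F hFa hFb
    refine ⟨r, ?_, M, fun i => ⟨((hM1 i).1).trans hFE, (hM1 i).2.1, (hM1 i).2.2⟩, hM2⟩
    have h1 : (1 - ε) * (n : ℝ) * q ≤ (1 - ε₀) * (n : ℝ) * q := by
      have hnq0 : (0:ℝ) ≤ (n : ℝ) * q := by positivity
      calc (1 - ε) * (n : ℝ) * q = (1 - ε) * ((n : ℝ) * q) := by ring
        _ ≤ (1 - ε₀) * ((n : ℝ) * q) := mul_le_mul_of_nonneg_right (by linarith) hnq0
        _ = (1 - ε₀) * (n : ℝ) * q := by ring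
    exact h1.trans (Nat.le_ceil _)
  -- step: the statement sum dominates the nobad sum
  have step1 : ∑ E ∈ (Finset.univ : Finset (Fin n × Fin n)).powerset,
        q ^ E.card * (1 - q) ^ (n * n - E.card) * (if nobad E then (1:ℝ) else 0)
      ≤ ∑ E ∈ (Finset.univ : Finset (Fin n × Fin n)).powerset,
        q ^ E.card * (1 - q) ^ (n * n - E.card) *
          (if ∃ m : ℕ, (1 - ε) * n * q ≤ (m : ℝ) ∧
              ∃ M : Fin m → Finset (Fin n × Fin n),
                (∀ i, M i ⊆ E ∧
                  (∀ a : Fin n, ((M i).filter (fun e => e.1 = a)).card = 1) ∧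
                  (∀ b : Fin n, ((M i).filter (fun e => e.2 = b)).card = 1)) ∧
                (∀ i j, i ≠ j → Disjoint (M i) (M j))
            then (1 : ℝ) else 0) := by
    apply Finset.sum_le_sum
    intro E _
    apply mul_le_mul_of_nonneg_left _ (hw E)
    split
    · rename_i hnb
      rw [if_pos (himp E hnb)]
    · split
      · norm_num
      · exact le_refl 0
  have hsplit : ∑ E ∈ (Finset.univ : Finset (Fin n × Fin n)).powerset,
      q ^ E.card * (1 - q) ^ (n * n - E.card) * (if nobad E then (1:ℝ) else 0)
      = 1 - ∑ E ∈ (Finset.univ : Finset (Fin n × Fin n)).powerset,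
      q ^ E.card * (1 - q) ^ (n * n - E.card) * (if ¬ nobad E then (1:ℝ) else 0) := by
    rw [eq_sub_iff_add_eq, ← Finset.sum_add_distrib]
    have hsum : ∑ E ∈ (Finset.univ : Finset (Fin n × Fin n)).powerset,
        (q ^ E.card * (1 - q) ^ (n * n - E.card) * (if nobad E then (1:ℝ) else 0) +
          q ^ E.card * (1 - q) ^ (n * n - E.card) * (if ¬ nobad E then (1:ℝ) else 0))
        = ∑ E ∈ (Finset.univ : Finset (Fin n × Fin n)).powerset,
          q ^ E.card * (1 - q) ^ (n * n - E.card) :=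
      Finset.sum_congr rfl (fun E _ => by
        by_cases h : nobad E
        · rw [if_pos h, if_neg (not_not_intro h)]; ring
        · rw [if_neg h, if_pos h]; ring)
    rw [hsum, sum_w_one q]
  set Pairs := ((Finset.univ : Finset (Fin n)).powerset ×ˢ
      (Finset.univ : Finset (Fin n)).powerset).filter
      (fun P => n + 1 ≤ P.1.card + P.2.card) with hPairs
  have hptwise : ∀ E : Finset (Fin n × Fin n), (if ¬ nobad E then (1:ℝ) else 0)
      ≤ ∑ P ∈ Pairs, (if ((E ∩ P.1 ×ˢ P.2).card : ℝ) <
          (1 - δ) * ((P.1 ×ˢ P.2).card : ℝ) * q then (1:ℝ) else 0) := by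
    intro E
    have hnn : ∀ P ∈ Pairs, (0:ℝ) ≤ (if ((E ∩ P.1 ×ˢ P.2).card : ℝ) <
        (1 - δ) * ((P.1 ×ˢ P.2).card : ℝ) * q then (1:ℝ) else 0) := by
      intro P _
      split <;> norm_num
    split
    · rename_i hb
      have hb2 : ¬ ∀ X Y : Finset (Fin n), n + 1 ≤ X.card + Y.card →
          (1 - δ) * ((X ×ˢ Y).card : ℝ) * q ≤ ((E ∩ X ×ˢ Y).card : ℝ) := hb
      push_neg at hb2
      obtain ⟨X, Y, hxy, hlt⟩ := hb2
      have hP : (X, Y) ∈ Pairs := Finset.mem_filter.mpr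
        ⟨Finset.mem_product.mpr ⟨Finset.mem_powerset.mpr (Finset.subset_univ _),
          Finset.mem_powerset.mpr (Finset.subset_univ _)⟩, hxy⟩
      have h2 := Finset.single_le_sum hnn hP
      refine le_trans ?_ h2
      have hlt' := hlt
      simp only [Finset.card_product] at hlt'
      push_cast at hlt'
      simp [Finset.card_product, hlt']
    · exact Finset.sum_nonneg hnn
  have hunion : ∑ E ∈ (Finset.univ : Finset (Fin n × Fin n)).powerset,
      q ^ E.card * (1 - q) ^ (n * n - E.card) * (if ¬ nobad E then (1:ℝ) else 0)
      ≤ 4 / (n : ℝ) ^ 2 := by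
    have c1 : ∑ E ∈ (Finset.univ : Finset (Fin n × Fin n)).powerset,
        q ^ E.card * (1 - q) ^ (n * n - E.card) * (if ¬ nobad E then (1:ℝ) else 0)
        ≤ ∑ E ∈ (Finset.univ : Finset (Fin n × Fin n)).powerset,
          ∑ P ∈ Pairs, q ^ E.card * (1 - q) ^ (n * n - E.card) *
            (if ((E ∩ P.1 ×ˢ P.2).card : ℝ) <
              (1 - δ) * ((P.1 ×ˢ P.2).card : ℝ) * q then (1:ℝ) else 0) := by
      apply Finset.sum_le_sum
      intro E _
      rw [← Finset.mul_sum]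
      exact mul_le_mul_of_nonneg_left (hptwise E) (hw E)
    have c2 : ∑ E ∈ (Finset.univ : Finset (Fin n × Fin n)).powerset,
          ∑ P ∈ Pairs, q ^ E.card * (1 - q) ^ (n * n - E.card) *
            (if ((E ∩ P.1 ×ˢ P.2).card : ℝ) <
              (1 - δ) * ((P.1 ×ˢ P.2).card : ℝ) * q then (1:ℝ) else 0)
        = ∑ P ∈ Pairs, ∑ E ∈ (Finset.univ : Finset (Fin n × Fin n)).powerset,
            q ^ E.card * (1 - q) ^ (n * n - E.card) *
            (if ((E ∩ P.1 ×ˢ P.2).card : ℝ) <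
              (1 - δ) * ((P.1 ×ˢ P.2).card : ℝ) * q then (1:ℝ) else 0) :=
      Finset.sum_comm
    have c3 : ∑ P ∈ Pairs, ∑ E ∈ (Finset.univ : Finset (Fin n × Fin n)).powerset,
            q ^ E.card * (1 - q) ^ (n * n - E.card) *
            (if ((E ∩ P.1 ×ˢ P.2).card : ℝ) <
              (1 - δ) * ((P.1 ×ˢ P.2).card : ℝ) * q then (1:ℝ) else 0)
        ≤ ∑ P ∈ Pairs, Real.exp (-((P.1.card : ℝ) * P.2.card * q * δ ^ 2 / 4)) := by
      apply Finset.sum_le_sum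
      intro P _
      have := chernoff (n := n) hq0 hq1 hδ0 hδ1 (P.1 ×ˢ P.2)
      have he : (((P.1 ×ˢ P.2).card : ℕ) : ℝ) * q * δ ^ 2 / 4
          = (P.1.card : ℝ) * P.2.card * q * δ ^ 2 / 4 := by
        rw [Finset.card_product]
        push_cast
        ring
      rw [he] at this
      exact this
    have c4 : ∑ P ∈ Pairs, Real.exp (-((P.1.card : ℝ) * P.2.card * q * δ ^ 2 / 4))
        ≤ 4 / (n : ℝ) ^ 2 := by
      have := counting (n := n) hq0.le hδ0 hn (by rw [hδdef] at hlog ⊢; linarith)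
      exact this
    linarith
  have step0 : 1 - 4 / (n : ℝ) ^ 2 ≤
      ∑ E ∈ (Finset.univ : Finset (Fin n × Fin n)).powerset,
        q ^ E.card * (1 - q) ^ (n * n - E.card) * (if nobad E then (1:ℝ) else 0) := by
    rw [hsplit]
    linarith
  linarith [step1, step0]

end SB15

/-- In the random bipartite graph `B(n,n,p)` on parts of size `n` with edge
probability `p = ω(log n / n)`, for every fixed `ε > 0`, with high probability
there are at least `(1−ε)np` pairwise edge-disjoint perfect matchings. -/
theorem stmt15 (ε : ℝ) (hε : 0 < ε) (p : ℕ → ℝ)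
    (hp : ∀ n, 0 < p n ∧ p n ≤ 1)
    (hω : Tendsto (fun n : ℕ => p n * n / Real.log n) atTop atTop) :
    Tendsto (fun n : ℕ =>
      ∑ E ∈ (Finset.univ : Finset (Fin n × Fin n)).powerset,
        p n ^ E.card * (1 - p n) ^ (n * n - E.card) *
          (if ∃ m : ℕ, (1 - ε) * n * p n ≤ (m : ℝ) ∧
              ∃ M : Fin m → Finset (Fin n × Fin n),
                (∀ i, M i ⊆ E ∧
                  (∀ a : Fin n, ((M i).filter (fun e => e.1 = a)).card = 1) ∧
                  (∀ b : Fin n, ((M i).filter (fun e => e.2 = b)).card = 1)) ∧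
                (∀ i j, i ≠ j → Disjoint (M i) (M j))
            then (1 : ℝ) else 0))
      atTop (nhds 1) := by
  classical
  set ε₀ : ℝ := min ε (1 / 2) with hε₀def
  have hε₀0 : 0 < ε₀ := lt_min hε (by norm_num)
  have hε₀half : ε₀ ≤ 1 / 2 := min_le_right _ _
  have hε₀ε : ε₀ ≤ ε := min_le_left _ _
  clear_value ε₀
  set δ : ℝ := ε₀ / 2 with hδdef
  have hδ0 : 0 < δ := by rw [hδdef]; exact half_pos hε₀0
  clear_value δ
  set K : ℝ := 48 / δ ^ 2 + 1 / δ with hKdef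
  clear_value K
  -- tendsto of the lower bound function
  have h4n : Tendsto (fun n : ℕ => 4 / (n : ℝ) ^ 2) atTop (nhds 0) := by
    apply Tendsto.div_atTop (tendsto_const_nhds (x := (4:ℝ)))
    exact (tendsto_pow_atTop (two_ne_zero)).comp tendsto_natCast_atTop_atTop
  have hg : Tendsto (fun n : ℕ => 1 - 4 / (n : ℝ) ^ 2) atTop (nhds 1) := by
    have := tendsto_const_nhds (x := (1:ℝ)) (f := atTop (α := ℕ)) |>.sub h4n
    simpa using this
  refine tendsto_of_tendsto_of_tendsto_of_le_of_le' hg tendsto_const_nhds ?_ ?_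
  · -- eventual lower bound
    have hev : ∀ᶠ n : ℕ in atTop, K ≤ p n * n / Real.log n ∧ 3 ≤ n :=
      (hω.eventually_ge_atTop K).and (eventually_ge_atTop 3)
    filter_upwards [hev] with n hn
    obtain ⟨hK, hn3⟩ := hn
    have hq0 := (hp n).1
    have hq1 := (hp n).2
    have hn2 : 2 ≤ n := by omega
    have hn3' : (3:ℝ) ≤ (n:ℝ) := by exact_mod_cast hn3
    have hlogpos : (0:ℝ) < Real.log n := Real.log_pos (by linarith)
    have hlog1 : (1:ℝ) ≤ Real.log n := by
      have h3 : (1:ℝ) < Real.log 3 := by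
        rw [Real.lt_log_iff_exp_lt (by norm_num)]
        calc Real.exp 1 < 2.7182818286 := Real.exp_one_lt_d9
          _ < 3 := by norm_num
      have := Real.log_le_log (by norm_num) hn3'
      linarith
    have hnq : K * Real.log n ≤ (n : ℝ) * p n := by
      have := mul_le_mul_of_nonneg_right hK hlogpos.le
      rw [div_mul_cancel₀ _ (ne_of_gt hlogpos)] at this
      linarith [this]
    have hK48 : (48 / δ ^ 2) * Real.log n ≤ K * Real.log n := by
      apply mul_le_mul_of_nonneg_right _ hlogpos.le
      rw [hKdef]
      have : (0:ℝ) < 1 / δ := one_div_pos.mpr hδ0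
      linarith
    have hlogcond : 48 * Real.log n ≤ (n : ℝ) * p n * (ε₀ / 2) ^ 2 := by
      have h1 : (48 / δ ^ 2) * Real.log n ≤ (n : ℝ) * p n := le_trans hK48 hnq
      have h2 : (48 / δ ^ 2) * Real.log n * δ ^ 2 ≤ (n : ℝ) * p n * δ ^ 2 :=
        mul_le_mul_of_nonneg_right h1 (by positivity)
      have h3 : (48 / δ ^ 2) * Real.log n * δ ^ 2 = 48 * Real.log n := by
        field_simp [pow_ne_zero 2 (ne_of_gt hδ0)]
      rw [← hδdef]
      linarith [h2, h3.symm.le]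
    have hnqcond : 1 ≤ ε₀ / 2 * ((n : ℝ) * p n) := by
      have h1 : (1 / δ) * Real.log n ≤ K * Real.log n := by
        apply mul_le_mul_of_nonneg_right _ hlogpos.le
        rw [hKdef]
        have : (0:ℝ) < 48 / δ ^ 2 := div_pos (by norm_num) (pow_pos hδ0 2)
        linarith
      have h2 : (1 / δ) * 1 ≤ (1 / δ) * Real.log n :=
        mul_le_mul_of_nonneg_left hlog1 (le_of_lt (one_div_pos.mpr hδ0))
      have h3 : 1 / δ ≤ (n : ℝ) * p n := by linarith
      have h4 : δ * (1 / δ) ≤ δ * ((n : ℝ) * p n) := mul_le_mul_of_nonneg_left h3 hδ0.le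
      rw [mul_one_div, div_self (ne_of_gt hδ0)] at h4
      rw [← hδdef]
      linarith
    exact SB15.main_bound n ε ε₀ (p n) hq0 hq1 hε₀0 hε₀half hε₀ε hn2 hnqcond hlogcond
  · -- upper bound
    apply Filter.Eventually.of_forall
    intro n
    have hq0 := (hp n).1
    have hq1 := (hp n).2
    have hw : ∀ E : Finset (Fin n × Fin n),
        (0:ℝ) ≤ p n ^ E.card * (1 - p n) ^ (n * n - E.card) := fun E =>
      mul_nonneg (pow_nonneg hq0.le _) (pow_nonneg (by linarith) _)
    calc ∑ E ∈ (Finset.univ : Finset (Fin n × Fin n)).powerset,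
          p n ^ E.card * (1 - p n) ^ (n * n - E.card) *
            (if ∃ m : ℕ, (1 - ε) * n * p n ≤ (m : ℝ) ∧
                ∃ M : Fin m → Finset (Fin n × Fin n),
                  (∀ i, M i ⊆ E ∧
                    (∀ a : Fin n, ((M i).filter (fun e => e.1 = a)).card = 1) ∧
                    (∀ b : Fin n, ((M i).filter (fun e => e.2 = b)).card = 1)) ∧
                  (∀ i j, i ≠ j → Disjoint (M i) (M j))
              then (1 : ℝ) else 0)
        ≤ ∑ E ∈ (Finset.univ : Finset (Fin n × Fin n)).powerset,
          p n ^ E.card * (1 - p n) ^ (n * n - E.card) := by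
          apply Finset.sum_le_sum
          intro E _
          have h1 : (if ∃ m : ℕ, (1 - ε) * n * p n ≤ (m : ℝ) ∧
                ∃ M : Fin m → Finset (Fin n × Fin n),
                  (∀ i, M i ⊆ E ∧
                    (∀ a : Fin n, ((M i).filter (fun e => e.1 = a)).card = 1) ∧
                    (∀ b : Fin n, ((M i).filter (fun e => e.2 = b)).card = 1)) ∧
                  (∀ i j, i ≠ j → Disjoint (M i) (M j))
              then (1 : ℝ) else 0) ≤ 1 := by
            split <;> norm_num
          calc p n ^ E.card * (1 - p n) ^ (n * n - E.card) *
              (if ∃ m : ℕ, (1 - ε) * n * p n ≤ (m : ℝ) ∧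
                ∃ M : Fin m → Finset (Fin n × Fin n),
                  (∀ i, M i ⊆ E ∧
                    (∀ a : Fin n, ((M i).filter (fun e => e.1 = a)).card = 1) ∧
                    (∀ b : Fin n, ((M i).filter (fun e => e.2 = b)).card = 1)) ∧
                  (∀ i j, i ≠ j → Disjoint (M i) (M j))
              then (1 : ℝ) else 0)
              ≤ p n ^ E.card * (1 - p n) ^ (n * n - E.card) * 1 :=
              mul_le_mul_of_nonneg_left h1 (hw E)
            _ = p n ^ E.card * (1 - p n) ^ (n * n - E.card) := mul_one _
      _ = 1 := SB15.sum_w_one (p n)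
end

section
/- Let P be a monotone increasing graph property, and let Ĝ_{k-out}(G) be the sequential model where vertices, in an order given by a permutation σ, each pick k distinct incident edges uniformly at random among edges of G not previously picked (or all remaining if fewer than k). Then Pr[G_{k-out}(G) ⊨ P] ≤ Pr[Ĝ_{k-out}(G) ⊨ P], where G_{k-out}(G) is the model in which each vertex independently picks k random neighbors. -/
open scoped Classical ENNReal

variable {V : Type*} [Fintype V] [DecidableEq V]

/-- The `k`-out process: the vertices in the list each independently pick a uniformly
random `k`-subset of their neighborhood in `G`; the resulting edges are accumulated
(in `picked`). Running it on a list of all vertices yields the edge set of a random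
graph distributed as `G_{k-out}(G)`. -/
noncomputable def koutProcess (G : SimpleGraph V) (k : ℕ)
    (hδ : ∀ v : V, k ≤ (G.neighborFinset v).card) :
    List V → Finset (Sym2 V) → PMF (Finset (Sym2 V))
  | [], picked => PMF.pure picked
  | v :: rest, picked =>
      (PMF.uniformOfFinset ((G.neighborFinset v).powersetCard k)
          (Finset.powersetCard_nonempty.mpr (hδ v))) >>= fun S =>
        koutProcess G k hδ rest (picked ∪ S.image (fun w => s(v, w)))

/-- The sequential model `Ĝ_{k-out}(G)`: the vertices in the list, in order, each
pick `k` distinct incident edges uniformly at random among the edges of `G` not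
picked in a previous step (or all remaining incident edges if fewer than `k`). -/
noncomputable def hatKoutProcess (G : SimpleGraph V) (k : ℕ) :
    List V → Finset (Sym2 V) → PMF (Finset (Sym2 V))
  | [], picked => PMF.pure picked
  | v :: rest, picked =>
      (PMF.uniformOfFinset
          ((G.incidenceFinset v \ picked).powersetCard
            (min k (G.incidenceFinset v \ picked).card))
          (Finset.powersetCard_nonempty.mpr (min_le_right _ _))) >>= fun S =>
        hatKoutProcess G k rest (picked ∪ S)

universe u

lemma unif_bind_om {α β : Type u} (t : Finset α) (ht : t.Nonempty) (f : α → PMF β)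
    (U : Set β) :
    ((PMF.uniformOfFinset t ht) >>= f).toOuterMeasure U
      = ∑ a ∈ t, ((t.card : ℝ≥0∞))⁻¹ * (f a).toOuterMeasure U := by
  show ((PMF.uniformOfFinset t ht).bind f).toOuterMeasure U = _
  rw [PMF.toOuterMeasure_bind_apply]
  rw [tsum_eq_sum (s := t) (fun a ha => by
    simp [PMF.uniformOfFinset_apply_of_notMem (hs := ht) ha])]
  exact Finset.sum_congr rfl fun a ha => by rw [PMF.uniformOfFinset_apply_of_mem (hs := ht) ha]

lemma kout_perm (G : SimpleGraph V) (k : ℕ) (hδ : ∀ v : V, k ≤ (G.neighborFinset v).card) :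
    ∀ {l₁ l₂ : List V}, l₁.Perm l₂ → ∀ A, koutProcess G k hδ l₁ A = koutProcess G k hδ l₂ A := by
  intro l₁ l₂ h
  induction h with
  | nil => intro A; rfl
  | cons x _ ih =>
      intro A
      simp only [koutProcess]
      exact congrArg _ (funext fun S => ih _)
  | swap x y l =>
      intro A
      simp only [koutProcess]
      show PMF.bind _ (fun Sy => PMF.bind _ fun Sx => _)
        = PMF.bind _ (fun Sx => PMF.bind _ fun Sy => _)
      rw [PMF.bind_comm]
      congr 1
      funext Sx
      congr 1
      funext Sy
      rw [Finset.union_right_comm]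
  | trans _ _ ih₁ ih₂ => intro A; exact (ih₁ A).trans (ih₂ A)

def edgeEmb (v : V) : V ↪ Sym2 V :=
  ⟨fun w => s(v, w), by
    intro a b h
    rw [Sym2.eq_iff] at h
    exact h.elim And.right fun h' => h'.2.trans h'.1⟩

lemma incidence_map (G : SimpleGraph V) (v : V) :
    (G.neighborFinset v).map (edgeEmb v) = G.incidenceFinset v := by
  ext e
  simp only [Finset.mem_map, SimpleGraph.mem_neighborFinset, SimpleGraph.mem_incidenceFinset]
  constructor
  · rintro ⟨w, hw, rfl⟩
    exact (G.mem_incidenceSet v w).2 hw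
  · intro he
    obtain ⟨w, rfl⟩ := Sym2.mem_iff_exists.1 he.2
    exact ⟨w, (G.mem_incidenceSet v w).1 he, rfl⟩

/-- number of `m`-subsets of `Bd` containing a fixed `D`. -/
lemma card_superset {α : Type*} [DecidableEq α] (Bd D : Finset α) (m : ℕ)
    (hD : D ⊆ Bd) (hDm : D.card ≤ m) :
    ((Bd.powersetCard m).filter (fun T => D ⊆ T)).card
      = (Bd.card - D.card).choose (m - D.card) := by
  rw [← Finset.card_sdiff_of_subset hD, ← Finset.card_powersetCard]
  apply Finset.card_bij' (fun T _ => T \ D) (fun E _ => E ∪ D)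
  · intro T hT
    rw [Finset.mem_filter, Finset.mem_powersetCard] at hT
    rw [Finset.mem_powersetCard]
    exact ⟨Finset.sdiff_subset_sdiff hT.1.1 Finset.Subset.rfl,
      by rw [Finset.card_sdiff_of_subset hT.2, hT.1.2]⟩
  · intro E hE
    rw [Finset.mem_powersetCard] at hE
    have hdisj : Disjoint E D := Finset.disjoint_of_subset_left hE.1 Finset.sdiff_disjoint
    rw [Finset.mem_filter, Finset.mem_powersetCard]
    refine ⟨⟨Finset.union_subset (hE.1.trans Finset.sdiff_subset) hD, ?_⟩,
      Finset.subset_union_right⟩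
    rw [Finset.card_union_of_disjoint hdisj, hE.2]
    omega
  · intro T hT
    rw [Finset.mem_filter] at hT
    exact Finset.sdiff_union_of_subset hT.2
  · intro E hE
    rw [Finset.mem_powersetCard] at hE
    have hdisj : Disjoint E D := Finset.disjoint_of_subset_left hE.1 Finset.sdiff_disjoint
    exact Finset.union_sdiff_cancel_right hdisj

/-- number of `k`-subsets `R` of `I` with `R \ B = D`. -/
lemma card_fiber {α : Type*} [DecidableEq α] (I B D : Finset α) (k : ℕ)
    (hDI : D ⊆ I) (hDB : Disjoint D B) (hDk : D.card ≤ k) :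
    ((I.powersetCard k).filter (fun R => R \ B = D)).card
      = ((I ∩ B).card).choose (k - D.card) := by
  rw [← Finset.card_powersetCard]
  apply Finset.card_bij' (fun R _ => R ∩ B) (fun E _ => D ∪ E)
  · intro R hR
    rw [Finset.mem_filter, Finset.mem_powersetCard] at hR
    rw [Finset.mem_powersetCard]
    refine ⟨Finset.inter_subset_inter hR.1.1 Finset.Subset.rfl, ?_⟩
    have := Finset.card_sdiff_add_card_inter R B
    rw [hR.2, hR.1.2] at this
    omega
  · intro E hE
    rw [Finset.mem_powersetCard] at hE
    have hEB : E ⊆ B := hE.1.trans Finset.inter_subset_right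
    have hdisj : Disjoint D E := hDB.mono_right hEB
    rw [Finset.mem_filter, Finset.mem_powersetCard]
    refine ⟨⟨Finset.union_subset hDI (hE.1.trans Finset.inter_subset_left), ?_⟩, ?_⟩
    · rw [Finset.card_union_of_disjoint hdisj, hE.2]; omega
    · rw [Finset.union_sdiff_distrib, (Finset.sdiff_eq_self_iff_disjoint).2 hDB,
        Finset.sdiff_eq_empty_iff_subset.2 hEB, Finset.union_empty]
  · intro R hR
    rw [Finset.mem_filter] at hR
    rw [← hR.2, Finset.sdiff_union_inter]
  · intro E hE
    rw [Finset.mem_powersetCard] at hE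
    have hEB : E ⊆ B := hE.1.trans Finset.inter_subset_right
    rw [Finset.union_inter_distrib_right, Finset.inter_eq_left.2 hEB,
      (Finset.disjoint_iff_inter_eq_empty.1 hDB), Finset.empty_union]

lemma numeric_identity (M b k : ℕ) :
    (∑ j ∈ Finset.range (min k M + 1),
        (((min k M).choose j : ℝ≥0∞) *
          ((b.choose (k - j) : ℝ≥0∞) * ((M - j).choose (min k M - j) : ℝ≥0∞)⁻¹)))
      * (M.choose (min k M) : ℝ≥0∞) = ((M + b).choose k : ℝ≥0∞) := by
  set m := min k M with hm
  have hmM : m ≤ M := min_le_right _ _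
  have hmk : m ≤ k := min_le_left _ _
  rw [Finset.sum_mul]
  have per : ∀ j ∈ Finset.range (m + 1),
      ((m.choose j : ℝ≥0∞) * ((b.choose (k - j) : ℝ≥0∞) * ((M - j).choose (m - j) : ℝ≥0∞)⁻¹))
        * (M.choose m : ℝ≥0∞)
      = ((M.choose j * b.choose (k - j) : ℕ) : ℝ≥0∞) := by
    intro j hj
    have hjm : j ≤ m := by simpa [Nat.lt_succ_iff] using Finset.mem_range.1 hj
    have key : m.choose j * M.choose m = M.choose j * (M - j).choose (m - j) := by
      rw [mul_comm]; exact Nat.choose_mul hjm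
    have hY0 : ((M - j).choose (m - j) : ℝ≥0∞) ≠ 0 := by
      exact_mod_cast (Nat.choose_pos (Nat.sub_le_sub_right hmM j)).ne'
    have hYt : ((M - j).choose (m - j) : ℝ≥0∞) ≠ ⊤ := ENNReal.natCast_ne_top _
    calc ((m.choose j : ℝ≥0∞) * ((b.choose (k - j) : ℝ≥0∞) * ((M - j).choose (m - j) : ℝ≥0∞)⁻¹))
          * (M.choose m : ℝ≥0∞)
        = (b.choose (k - j) : ℝ≥0∞) *
            (((m.choose j : ℝ≥0∞) * (M.choose m : ℝ≥0∞)) * ((M - j).choose (m - j) : ℝ≥0∞)⁻¹) := by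
          ring
      _ = (b.choose (k - j) : ℝ≥0∞) *
            (((M.choose j : ℝ≥0∞) * ((M - j).choose (m - j) : ℝ≥0∞)) *
              ((M - j).choose (m - j) : ℝ≥0∞)⁻¹) := by
          rw [← Nat.cast_mul, key, Nat.cast_mul]
      _ = (b.choose (k - j) : ℝ≥0∞) * (M.choose j : ℝ≥0∞) := by
          rw [mul_assoc, ENNReal.mul_inv_cancel hY0 hYt, mul_one]
      _ = ((M.choose j * b.choose (k - j) : ℕ) : ℝ≥0∞) := by
          rw [Nat.cast_mul, mul_comm]
  rw [Finset.sum_congr rfl per, ← Nat.cast_sum]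
  congr 1
  have hv : ∑ j ∈ Finset.range (k + 1), M.choose j * b.choose (k - j) = (M + b).choose k := by
    rw [Nat.add_choose_eq, Finset.Nat.sum_antidiagonal_eq_sum_range_succ_mk]
  rw [← hv]
  apply Finset.sum_subset (Finset.range_subset_range.2 (by omega))
  intro j hj hj'
  rw [Finset.mem_range] at hj hj'
  have : M < j := by omega
  rw [Nat.choose_eq_zero_of_lt this, zero_mul]

lemma key_lemma (G : SimpleGraph V) (k : ℕ) (hδ : ∀ v : V, k ≤ (G.neighborFinset v).card)
    (U : Set (Finset (Sym2 V)))
    (hU : ∀ ⦃A B : Finset (Sym2 V)⦄, A ⊆ B → A ∈ U → B ∈ U) :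
    ∀ (l : List V) (A B : Finset (Sym2 V)), A ⊆ B →
      (koutProcess G k hδ l A).toOuterMeasure U
        ≤ (hatKoutProcess G k l B).toOuterMeasure U := by
  intro l
  induction l with
  | nil =>
      intro A B hAB
      show (PMF.pure A).toOuterMeasure U ≤ (PMF.pure B).toOuterMeasure U
      rw [PMF.toOuterMeasure_pure_apply, PMF.toOuterMeasure_pure_apply]
      split_ifs with h1 h2
      · exact le_rfl
      · exact absurd (hU hAB h1) h2
      · exact zero_le
      · exact le_rfl
  | cons v rest ih =>
      intro A B hAB
      simp only [koutProcess, hatKoutProcess]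
      rw [unif_bind_om, unif_bind_om]
      set I := G.incidenceFinset v with hI
      set Bd := I \ B with hBd
      have hdeg : (G.neighborFinset v).card = I.card := by
        rw [hI, SimpleGraph.card_incidenceFinset_eq_degree]
        rfl
      have hkn : k ≤ I.card := hdeg ▸ hδ v
      set m := min k Bd.card with hm
      have hmM : m ≤ Bd.card := min_le_right _ _
      have hmk : m ≤ k := min_le_left _ _
      rw [Finset.card_powersetCard, Finset.card_powersetCard, hdeg]
      set C : ℝ≥0∞ := ((I.card.choose k : ℕ) : ℝ≥0∞) with hC
      set C' : ℝ≥0∞ := ((Bd.card.choose m : ℕ) : ℝ≥0∞) with hC'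
      have hC0 : C ≠ 0 := by
        rw [hC]; exact_mod_cast (Nat.choose_pos hkn).ne'
      have hCt : C ≠ ⊤ := by rw [hC]; exact ENNReal.natCast_ne_top _
      have hC'0 : C' ≠ 0 := by
        rw [hC']; exact_mod_cast (Nat.choose_pos hmM).ne'
      have hC't : C' ≠ ⊤ := by rw [hC']; exact ENNReal.natCast_ne_top _
      set φ : Finset (Sym2 V) → ℝ≥0∞ :=
        fun R => (koutProcess G k hδ rest (A ∪ R)).toOuterMeasure U with hφ
      set ψ : Finset (Sym2 V) → ℝ≥0∞ :=
        fun T => (hatKoutProcess G k rest (B ∪ T)).toOuterMeasure U with hψ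
      show (∑ S ∈ (G.neighborFinset v).powersetCard k, C⁻¹ * φ (S.image fun w => s(v, w)))
        ≤ ∑ T ∈ Bd.powersetCard m, C'⁻¹ * ψ T
      have reix : (∑ S ∈ (G.neighborFinset v).powersetCard k, C⁻¹ * φ (S.image fun w => s(v, w)))
          = ∑ R ∈ I.powersetCard k, C⁻¹ * φ R := by
        rw [hI, ← incidence_map G v, Finset.powersetCard_map, Finset.sum_map]
        refine Finset.sum_congr rfl fun S _ => ?_
        show C⁻¹ * φ (Finset.image (fun w => s(v, w)) S) = C⁻¹ * φ (Finset.map (edgeEmb v) S)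
        rw [Finset.map_eq_image]
        rfl
      rw [reix]
      -- Step A
      have stepA : ∀ R ∈ I.powersetCard k,
          φ R ≤ ∑ T ∈ (Bd.powersetCard m).filter (fun T => R \ B ⊆ T),
            (((Bd.card - (R \ B).card).choose (m - (R \ B).card) : ℝ≥0∞))⁻¹ * ψ T := by
        intro R hR
        rw [Finset.mem_powersetCard] at hR
        have hDbd : R \ B ⊆ Bd := by
          rw [hBd]; exact Finset.sdiff_subset_sdiff hR.1 Finset.Subset.rfl
        have hDm : (R \ B).card ≤ m :=
          le_min ((Finset.card_le_card Finset.sdiff_subset).trans hR.2.le)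
            (Finset.card_le_card hDbd)
        have hNcard := card_superset Bd (R \ B) m hDbd hDm
        have hN0 : (((Bd.card - (R \ B).card).choose (m - (R \ B).card) : ℝ≥0∞)) ≠ 0 := by
          exact_mod_cast (Nat.choose_pos (Nat.sub_le_sub_right hmM _)).ne'
        have hNt : (((Bd.card - (R \ B).card).choose (m - (R \ B).card) : ℝ≥0∞)) ≠ ⊤ :=
          ENNReal.natCast_ne_top _
        have hterm : ∀ T ∈ (Bd.powersetCard m).filter (fun T => R \ B ⊆ T), φ R ≤ ψ T := by
          intro T hT
          rw [Finset.mem_filter] at hT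
          apply ih
          intro x hx
          rcases Finset.mem_union.1 hx with hxA | hxR
          · exact Finset.mem_union_left _ (hAB hxA)
          · by_cases hxB : x ∈ B
            · exact Finset.mem_union_left _ hxB
            · exact Finset.mem_union_right _ (hT.2 (Finset.mem_sdiff.2 ⟨hxR, hxB⟩))
        have hsum : ((Bd.powersetCard m).filter (fun T => R \ B ⊆ T)).card • φ R
            ≤ ∑ T ∈ (Bd.powersetCard m).filter (fun T => R \ B ⊆ T), ψ T :=
          Finset.card_nsmul_le_sum _ _ _ hterm
        rw [hNcard, nsmul_eq_mul] at hsum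
        calc φ R = (((Bd.card - (R \ B).card).choose (m - (R \ B).card) : ℝ≥0∞))⁻¹ *
              ((((Bd.card - (R \ B).card).choose (m - (R \ B).card) : ℝ≥0∞)) * φ R) := by
              rw [← mul_assoc, ENNReal.inv_mul_cancel hN0 hNt, one_mul]
          _ ≤ (((Bd.card - (R \ B).card).choose (m - (R \ B).card) : ℝ≥0∞))⁻¹ *
              ∑ T ∈ (Bd.powersetCard m).filter (fun T => R \ B ⊆ T), ψ T :=
              mul_le_mul_right hsum _
          _ = ∑ T ∈ (Bd.powersetCard m).filter (fun T => R \ B ⊆ T),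
              (((Bd.card - (R \ B).card).choose (m - (R \ B).card) : ℝ≥0∞))⁻¹ * ψ T :=
              Finset.mul_sum _ _ _
      -- Coefficient computation
      have coeff : ∀ T ∈ Bd.powersetCard m,
          (∑ R ∈ I.powersetCard k, if R \ B ⊆ T then
              C⁻¹ * (((Bd.card - (R \ B).card).choose (m - (R \ B).card) : ℝ≥0∞))⁻¹ else 0)
            = C'⁻¹ := by
        intro T hT
        rw [Finset.mem_powersetCard] at hT
        obtain ⟨hTBd, hTm⟩ := hT
        have hmaps : ∀ R ∈ I.powersetCard k, R \ B ∈ Bd.powerset := fun R hR =>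
          Finset.mem_powerset.2 (by
            rw [hBd]
            exact Finset.sdiff_subset_sdiff (Finset.mem_powersetCard.1 hR).1 Finset.Subset.rfl)
        have hfil : Bd.powerset.filter (fun D => D ⊆ T) = T.powerset := by
          ext D
          simp only [Finset.mem_filter, Finset.mem_powerset]
          exact ⟨fun h => h.2, fun h => ⟨h.trans hTBd, h⟩⟩
        have inner : ∀ D ∈ Bd.powerset,
            (∑ R ∈ (I.powersetCard k).filter (fun R => R \ B = D),
              if R \ B ⊆ T then
                C⁻¹ * (((Bd.card - (R \ B).card).choose (m - (R \ B).card) : ℝ≥0∞))⁻¹ else 0)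
            = (((I.powersetCard k).filter (fun R => R \ B = D)).card : ℝ≥0∞)
                * (if D ⊆ T then
                    C⁻¹ * (((Bd.card - D.card).choose (m - D.card) : ℝ≥0∞))⁻¹ else 0) := by
          intro D _
          rw [Finset.sum_congr rfl (fun R hR => by rw [(Finset.mem_filter.1 hR).2]),
            Finset.sum_const, nsmul_eq_mul]
        calc (∑ R ∈ I.powersetCard k, if R \ B ⊆ T then
                C⁻¹ * (((Bd.card - (R \ B).card).choose (m - (R \ B).card) : ℝ≥0∞))⁻¹ else 0)
            = ∑ D ∈ Bd.powerset, ∑ R ∈ (I.powersetCard k).filter (fun R => R \ B = D),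
                (if R \ B ⊆ T then
                  C⁻¹ * (((Bd.card - (R \ B).card).choose (m - (R \ B).card) : ℝ≥0∞))⁻¹ else 0) :=
              (Finset.sum_fiberwise_of_maps_to hmaps _).symm
          _ = ∑ D ∈ Bd.powerset,
                (((I.powersetCard k).filter (fun R => R \ B = D)).card : ℝ≥0∞)
                  * (if D ⊆ T then
                      C⁻¹ * (((Bd.card - D.card).choose (m - D.card) : ℝ≥0∞))⁻¹ else 0) :=
              Finset.sum_congr rfl inner
          _ = ∑ D ∈ Bd.powerset,
                (if D ⊆ T then
                  (((I.powersetCard k).filter (fun R => R \ B = D)).card : ℝ≥0∞)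
                    * (C⁻¹ * (((Bd.card - D.card).choose (m - D.card) : ℝ≥0∞))⁻¹) else 0) := by
              refine Finset.sum_congr rfl fun D _ => ?_
              split_ifs <;> simp
          _ = ∑ D ∈ T.powerset,
                (((I.powersetCard k).filter (fun R => R \ B = D)).card : ℝ≥0∞)
                  * (C⁻¹ * (((Bd.card - D.card).choose (m - D.card) : ℝ≥0∞))⁻¹) := by
              rw [← hfil, Finset.sum_filter]
          _ = ∑ D ∈ T.powerset,
                (((I ∩ B).card.choose (k - D.card) : ℕ) : ℝ≥0∞)
                  * (C⁻¹ * (((Bd.card - D.card).choose (m - D.card) : ℝ≥0∞))⁻¹) := by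
              refine Finset.sum_congr rfl fun D hD => ?_
              rw [Finset.mem_powerset] at hD
              have hDBd : D ⊆ Bd := hD.trans hTBd
              have h1 : D ⊆ I := hDBd.trans (by rw [hBd]; exact Finset.sdiff_subset)
              have h2 : Disjoint D B := Finset.disjoint_of_subset_left hDBd
                (by rw [hBd]; exact Finset.sdiff_disjoint)
              have h3 : D.card ≤ k := ((Finset.card_le_card hD).trans hTm.le).trans hmk
              rw [card_fiber I B D k h1 h2 h3]
          _ = ∑ j ∈ Finset.range (m + 1), ∑ D ∈ T.powersetCard j,
                (((I ∩ B).card.choose (k - D.card) : ℕ) : ℝ≥0∞)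
                  * (C⁻¹ * (((Bd.card - D.card).choose (m - D.card) : ℝ≥0∞))⁻¹) := by
              rw [Finset.sum_powerset, hTm]
          _ = ∑ j ∈ Finset.range (m + 1), (m.choose j : ℝ≥0∞) *
                ((((I ∩ B).card.choose (k - j) : ℕ) : ℝ≥0∞)
                  * (C⁻¹ * (((Bd.card - j).choose (m - j) : ℝ≥0∞))⁻¹)) := by
              refine Finset.sum_congr rfl fun j _ => ?_
              rw [Finset.sum_congr rfl (fun D hD => by
                  rw [(Finset.mem_powersetCard.1 hD).2]),
                Finset.sum_const, nsmul_eq_mul, Finset.card_powersetCard, hTm]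
          _ = C'⁻¹ := by
              have hMb : Bd.card + (I ∩ B).card = I.card := by
                rw [hBd]; exact Finset.card_sdiff_add_card_inter I B
              have hSC' := numeric_identity Bd.card (I ∩ B).card k
              rw [← hm, hMb] at hSC'
              have hrearr : (∑ j ∈ Finset.range (m + 1), (m.choose j : ℝ≥0∞) *
                    ((((I ∩ B).card.choose (k - j) : ℕ) : ℝ≥0∞)
                      * (C⁻¹ * (((Bd.card - j).choose (m - j) : ℝ≥0∞))⁻¹)))
                  = C⁻¹ * ∑ j ∈ Finset.range (m + 1), (m.choose j : ℝ≥0∞) *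
                      ((((I ∩ B).card.choose (k - j) : ℕ) : ℝ≥0∞)
                        * (((Bd.card - j).choose (m - j) : ℝ≥0∞))⁻¹) := by
                rw [Finset.mul_sum]
                exact Finset.sum_congr rfl fun j _ => by ring
              rw [hrearr]
              have hS : (∑ j ∈ Finset.range (m + 1), (m.choose j : ℝ≥0∞) *
                    ((((I ∩ B).card.choose (k - j) : ℕ) : ℝ≥0∞)
                      * (((Bd.card - j).choose (m - j) : ℝ≥0∞))⁻¹)) = C * C'⁻¹ := by
                have := hSC'
                calc (∑ j ∈ Finset.range (m + 1), (m.choose j : ℝ≥0∞) *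
                      ((((I ∩ B).card.choose (k - j) : ℕ) : ℝ≥0∞)
                        * (((Bd.card - j).choose (m - j) : ℝ≥0∞))⁻¹))
                    = ((∑ j ∈ Finset.range (m + 1), (m.choose j : ℝ≥0∞) *
                        ((((I ∩ B).card.choose (k - j) : ℕ) : ℝ≥0∞)
                          * (((Bd.card - j).choose (m - j) : ℝ≥0∞))⁻¹)) * C') * C'⁻¹ := by
                      rw [mul_assoc, ENNReal.mul_inv_cancel hC'0 hC't, mul_one]
                  _ = C * C'⁻¹ := by rw [this]
              rw [hS, ← mul_assoc, ENNReal.inv_mul_cancel hC0 hCt, one_mul]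
      -- main chain
      calc (∑ R ∈ I.powersetCard k, C⁻¹ * φ R)
          ≤ ∑ R ∈ I.powersetCard k, C⁻¹ *
              ∑ T ∈ (Bd.powersetCard m).filter (fun T => R \ B ⊆ T),
                (((Bd.card - (R \ B).card).choose (m - (R \ B).card) : ℝ≥0∞))⁻¹ * ψ T :=
            Finset.sum_le_sum fun R hR => mul_le_mul_right (stepA R hR) _
        _ = ∑ R ∈ I.powersetCard k, ∑ T ∈ Bd.powersetCard m,
              (if R \ B ⊆ T then
                C⁻¹ * (((Bd.card - (R \ B).card).choose (m - (R \ B).card) : ℝ≥0∞))⁻¹ else 0)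
                * ψ T := by
            refine Finset.sum_congr rfl fun R _ => ?_
            rw [Finset.mul_sum, Finset.sum_filter]
            refine Finset.sum_congr rfl fun T _ => ?_
            split_ifs <;> simp [mul_assoc]
        _ = ∑ T ∈ Bd.powersetCard m,
              (∑ R ∈ I.powersetCard k, if R \ B ⊆ T then
                C⁻¹ * (((Bd.card - (R \ B).card).choose (m - (R \ B).card) : ℝ≥0∞))⁻¹ else 0)
                * ψ T := by
            rw [Finset.sum_comm]
            exact Finset.sum_congr rfl fun T _ => (Finset.sum_mul _ _ _).symm
        _ = ∑ T ∈ Bd.powersetCard m, C'⁻¹ * ψ T := by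
            refine Finset.sum_congr rfl fun T hT => ?_
            rw [coeff T hT]

/-- For every monotone increasing graph property `P`, the probability that
`G_{k-out}(G)` satisfies `P` is at most the probability that the sequential model
`Ĝ_{k-out}(G)` (run with a uniformly random order of the vertices) satisfies `P`. -/
theorem stmt18 [Nonempty V] (G : SimpleGraph V) (k : ℕ)
    (hδ : ∀ v : V, k ≤ (G.neighborFinset v).card)
    (P : SimpleGraph V → Prop)
    (hmono : ∀ G₁ G₂ : SimpleGraph V, G₁ ≤ G₂ → P G₁ → P G₂) :
    (koutProcess G k hδ Finset.univ.toList ∅).toOuterMeasure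
        {E : Finset (Sym2 V) | P (SimpleGraph.fromEdgeSet ↑E)}
      ≤ ((PMF.uniformOfFintype (Equiv.Perm V)) >>= fun σ =>
            hatKoutProcess G k (Finset.univ.toList.map σ) ∅).toOuterMeasure
        {E : Finset (Sym2 V) | P (SimpleGraph.fromEdgeSet ↑E)} := by
  set U : Set (Finset (Sym2 V)) := {E : Finset (Sym2 V) | P (SimpleGraph.fromEdgeSet ↑E)} with hUdef
  have hUmono : ∀ ⦃A B : Finset (Sym2 V)⦄, A ⊆ B → A ∈ U → B ∈ U := by
    intro A B hAB hA
    exact hmono _ _ (SimpleGraph.fromEdgeSet_mono (by exact_mod_cast hAB)) hA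
  have hperm : ∀ σ : Equiv.Perm V, (Finset.univ.toList : List V).Perm (Finset.univ.toList.map σ) := by
    intro σ
    apply List.perm_of_nodup_nodup_toFinset_eq (Finset.nodup_toList _)
      ((Finset.nodup_toList _).map σ.injective)
    ext x
    simp only [List.mem_toFinset, List.mem_map, Finset.mem_toList, Finset.mem_univ, true_and,
      true_iff, iff_true]
    exact ⟨σ.symm x, by simp⟩
  have hle : ∀ σ : Equiv.Perm V,
      (koutProcess G k hδ Finset.univ.toList ∅).toOuterMeasure U
        ≤ (hatKoutProcess G k (Finset.univ.toList.map σ) ∅).toOuterMeasure U := by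
    intro σ
    rw [kout_perm G k hδ (hperm σ) ∅]
    exact key_lemma G k hδ U hUmono _ ∅ ∅ Finset.Subset.rfl
  show (koutProcess G k hδ Finset.univ.toList ∅).toOuterMeasure U
      ≤ ((PMF.uniformOfFintype (Equiv.Perm V)).bind fun σ =>
            hatKoutProcess G k (Finset.univ.toList.map σ) ∅).toOuterMeasure U
  rw [PMF.toOuterMeasure_bind_apply]
  have hc0 : ((Fintype.card (Equiv.Perm V) : ℕ) : ℝ≥0∞) ≠ 0 := by
    exact_mod_cast Fintype.card_pos.ne'
  have hct : ((Fintype.card (Equiv.Perm V) : ℕ) : ℝ≥0∞) ≠ ⊤ := ENNReal.natCast_ne_top _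
  calc (koutProcess G k hδ Finset.univ.toList ∅).toOuterMeasure U
      = ∑' _ : Equiv.Perm V, ((Fintype.card (Equiv.Perm V) : ℕ) : ℝ≥0∞)⁻¹ *
          (koutProcess G k hδ Finset.univ.toList ∅).toOuterMeasure U := by
        rw [tsum_fintype, Finset.sum_const, nsmul_eq_mul, ← mul_assoc,
          Finset.card_univ, ENNReal.mul_inv_cancel hc0 hct, one_mul]
    _ ≤ ∑' σ : Equiv.Perm V, ((Fintype.card (Equiv.Perm V) : ℕ) : ℝ≥0∞)⁻¹ *
          (hatKoutProcess G k (Finset.univ.toList.map σ) ∅).toOuterMeasure U :=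
        ENNReal.tsum_le_tsum fun σ => mul_le_mul_right (hle σ) _
    _ = ∑' σ : Equiv.Perm V, (PMF.uniformOfFintype (Equiv.Perm V)) σ *
          (hatKoutProcess G k (Finset.univ.toList.map σ) ∅).toOuterMeasure U := by
        refine tsum_congr fun σ => ?_
        rw [PMF.uniformOfFintype_apply]
end
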